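/- arXiv:2503.05140 — 2 statements merged into one kernel-verified Lean document; each statement's English description precedes it below -/
import Mathlib

section
/- There exists N ∈ ℕ such that the following holds. Let γ satisfy the curve hypotheses with parameter N. Let p, q, r ∈ [1,∞], and suppose there is a constant C such that ‖Tf‖_{L^r_u L^q_x(ℝ²×[1,2])} ≤ C‖f‖_{L^p(ℝ²)} for all f ∈ L^p(ℝ²). Then (with the convention 1/∞ = 0): 1/q ≥ max{ 1/(2p) − 1/(2r), 2/p − (r+1)/r } and max{ 1/r − 1/q, 0 } ≥ s̃_{A,0}(p,q,q), where s̃_{A,0}(p,q,q) := 1/p − 3/q if q ≥ 3p′; s̃_{A,0}(p,q,q) := 3/(2p) − 3/(2q) − 1/2 if p′ < q < 3p′; and s̃_{A,0}(p,q,q) := 2/p − 1/q − 1 if q ≤ p′ (p′ the conjugate exponent of p). -/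
open MeasureTheory Filter Set
open scoped ENNReal NNReal

noncomputable section

/-- The averaging operator along the dilated plane curve `(u t, u γ(t))`:
`Tf(x,u) = ∫_0^1 f(x₁ - u t, x₂ - u γ(t)) dt`. -/
def Tavg (γ : ℝ → ℝ) (f : ℝ × ℝ → ℝ) (x : ℝ × ℝ) (u : ℝ) : ℝ :=
  ∫ t in Set.Ioc (0 : ℝ) 1, f (x.1 - u * t, x.2 - u * γ t)

/-- The curve hypotheses with parameter `N`: `γ ∈ C^N((0,1])`, `γ(t) → 0` as `t → 0⁺`,
`γ` monotonic on `(0,1]`, with the lower bounds (i) for `j = 1,2` and the upper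
bounds (ii) for `j = 1,…,N` on `|tʲ γ⁽ʲ⁾(t) / γ(t)|`. -/
def CurveHyp (γ : ℝ → ℝ) (N : ℕ) : Prop :=
  ContDiffOn ℝ N γ (Set.Ioc 0 1) ∧
  Filter.Tendsto γ (nhdsWithin 0 (Set.Ioi 0)) (nhds 0) ∧
  (MonotoneOn γ (Set.Ioc 0 1) ∨ AntitoneOn γ (Set.Ioc 0 1)) ∧
  (∀ j : ℕ, 1 ≤ j → j ≤ 2 → ∃ C : ℝ, 0 < C ∧ ∀ t ∈ Set.Ioc (0 : ℝ) 1,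
    C ≤ |t ^ j * iteratedDerivWithin j γ (Set.Ioc 0 1) t / γ t|) ∧
  (∀ j : ℕ, 1 ≤ j → j ≤ N → ∃ C : ℝ, 0 < C ∧ ∀ t ∈ Set.Ioc (0 : ℝ) 1,
    |t ^ j * iteratedDerivWithin j γ (Set.Ioc 0 1) t / γ t| ≤ C)

/-- `ω := limsup_{t→0⁺} ln|γ(t)| / ln t`. -/
def curveOmega (γ : ℝ → ℝ) : ℝ :=
  Filter.limsup (fun t => Real.log |γ t| / Real.log t) (nhdsWithin 0 (Set.Ioi 0))

/-- The `L^q(μ)` norm (valued in `ℝ≥0∞`) of an `ℝ≥0∞`-valued function, with the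
essential supremum when `q = ∞`. -/
def eLpNormENN {α : Type*} [MeasurableSpace α] (g : α → ℝ≥0∞) (q : ℝ≥0∞)
    (μ : Measure α) : ℝ≥0∞ :=
  if q = ∞ then essSup g μ else (∫⁻ a, g a ^ q.toReal ∂μ) ^ (1 / q.toReal)


/-- The time-space mixed norm `‖F‖_{L^r_u L^q_x(ℝ² × [1,2])}`. -/
def mixedUX (r q : ℝ≥0∞) (F : ℝ × ℝ → ℝ → ℝ) : ℝ≥0∞ :=
  eLpNormENN (fun u => eLpNorm (fun x => F x u) q (volume : Measure (ℝ × ℝ))) r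
    ((volume : Measure ℝ).restrict (Set.Icc 1 2))

/-- `s̃_{A,0}(p,q,q)`, written in terms of `ip = 1/p` and `iq = 1/q`
(so that `q ≥ 3p'` reads `iq ≤ (1-ip)/3` and `q ≤ p'` reads `iq ≥ 1-ip`). -/
def sA0qq (ip iq : ℝ) : ℝ :=
  if iq ≤ (1 - ip) / 3 then ip - 3 * iq
  else if iq < 1 - ip then 3 / (2 : ℝ) * ip - 3 / (2 : ℝ) * iq - 1 / 2
  else 2 * ip - iq - 1

private lemma rpow_le_self' {x e : ℝ} (hx : 1 ≤ x) (he1 : e ≤ 1) : x ^ e ≤ x := by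
  calc x ^ e ≤ x ^ (1:ℝ) := Real.rpow_le_rpow_of_exponent_le hx he1
  _ = x := Real.rpow_one x

private lemma self_le_rpow' {x e : ℝ} (hx : 0 < x) (hx1 : x ≤ 1) (he1 : e ≤ 1) : x ≤ x ^ e := by
  calc x = x ^ (1:ℝ) := (Real.rpow_one x).symm
  _ ≤ x ^ e := Real.rpow_le_rpow_of_exponent_ge hx hx1 he1

private lemma rpow_nat_mul' {δ : ℝ} (hδ : 0 ≤ δ) (n : ℕ) (e : ℝ) :
    ((δ ^ n : ℝ)) ^ e = δ ^ ((n : ℝ) * e) := by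
  rw [← Real.rpow_natCast δ n, ← Real.rpow_mul hδ]

/-- From `c δ^a ≤ K δ^b` for all small `δ` we get `b ≤ a`. -/
private lemma exponent_le {c K a b : ℝ} (hc : 0 < c) (_hK : 0 < K)
    (h : ∀ δ : ℝ, δ ∈ Ioo (0:ℝ) (1/64) → c * δ ^ a ≤ K * δ ^ b) : b ≤ a := by
  by_contra hab
  push_neg at hab
  have he : a - b < 0 := by linarith
  set δ : ℝ := min (1/128) (Real.exp ((Real.log (K/c) + 1)/(a-b))) with hδdef
  have hδpos : 0 < δ := lt_min (by norm_num) (Real.exp_pos _)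
  have hδlt : δ < 1/64 := lt_of_le_of_lt (min_le_left _ _) (by norm_num)
  have h1 := h δ ⟨hδpos, hδlt⟩
  have hpb : (0:ℝ) < δ ^ b := Real.rpow_pos_of_pos hδpos b
  have hpe : (0:ℝ) < δ ^ (a-b) := Real.rpow_pos_of_pos hδpos _
  have h2 : δ ^ (a-b) ≤ K / c := by
    rw [Real.rpow_sub hδpos, div_le_div_iff₀ hpb hc]
    nlinarith
  have h3 : Real.log (δ ^ (a-b)) ≤ Real.log (K/c) := Real.log_le_log hpe h2
  rw [Real.log_rpow hδpos] at h3
  have h4 : Real.log δ ≤ (Real.log (K/c) + 1)/(a-b) := by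
    have := min_le_right (1/128 : ℝ) (Real.exp ((Real.log (K/c) + 1)/(a-b)))
    calc Real.log δ ≤ Real.log (Real.exp ((Real.log (K/c) + 1)/(a-b))) :=
          Real.log_le_log hδpos this
      _ = (Real.log (K/c) + 1)/(a-b) := Real.log_exp _
  have h5 : (a-b) * ((Real.log (K/c) + 1)/(a-b)) ≤ (a-b) * Real.log δ :=
    mul_le_mul_of_nonpos_left h4 he.le
  rw [mul_div_cancel₀ _ (by linarith : a - b ≠ 0)] at h5
  linarith

private lemma inner_lower {g : ℝ × ℝ → ℝ} {q : ℝ≥0∞} (hq : q ≠ 0)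
    {E : Set (ℝ × ℝ)} (hEm : MeasurableSet E) (hE0 : volume E ≠ 0)
    {a : ℝ} (ha : 0 ≤ a) (h : ∀ x ∈ E, a ≤ g x) :
    ENNReal.ofReal a * volume E ^ (q⁻¹).toReal ≤ eLpNorm g q volume := by
  have hmono : eLpNorm (E.indicator fun _ => a) q volume ≤ eLpNorm g q volume := by
    apply eLpNorm_mono
    intro x
    by_cases hx : x ∈ E
    · rw [Set.indicator_of_mem hx, Real.norm_eq_abs, Real.norm_eq_abs, abs_of_nonneg ha]
      exact le_trans (h x hx) (le_abs_self _)
    · simp [Set.indicator_of_notMem hx]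
  calc ENNReal.ofReal a * volume E ^ (q⁻¹).toReal
      = eLpNorm (E.indicator fun _ => a) q volume := by
        rw [eLpNorm_indicator_const' hEm hE0 hq, Real.enorm_eq_ofReal ha,
          ENNReal.toReal_inv, one_div]
    _ ≤ _ := hmono

private lemma outer_lower {G : ℝ → ℝ≥0∞} {r : ℝ≥0∞} (hr1 : 1 ≤ r)
    {J : Set ℝ} (hJm : MeasurableSet J) (hJs : J ⊆ Icc (1:ℝ) 2)
    (hJ0 : volume J ≠ 0) {b : ℝ≥0∞} (hb : ∀ u ∈ J, b ≤ G u) :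
    b * volume J ^ (r⁻¹).toReal
      ≤ eLpNormENN G r ((volume : Measure ℝ).restrict (Set.Icc 1 2)) := by
  have hr0 : r ≠ 0 := (lt_of_lt_of_le zero_lt_one hr1).ne'
  set μI := (volume : Measure ℝ).restrict (Set.Icc (1:ℝ) 2) with hμI
  have hμJ : μI J = volume J := by
    rw [hμI, Measure.restrict_apply hJm, Set.inter_eq_self_of_subset_left hJs]
  rw [eLpNormENN]
  by_cases hrtop : r = ∞
  · rw [if_pos hrtop]
    have h0 : (r⁻¹).toReal = 0 := by rw [hrtop]; simp
    rw [h0, ENNReal.rpow_zero, mul_one]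
    by_contra hlt
    push_neg at hlt
    have hJA : J ⊆ {u | ¬ G u ≤ essSup G μI} := by
      intro u hu hGu
      exact absurd (le_trans (hb u hu) hGu) (not_le_of_gt hlt)
    have h00 : μI J = 0 :=
      measure_mono_null hJA (by simpa [ae_iff] using ae_le_essSup (f := G) (μ := μI))
    rw [hμJ] at h00
    exact hJ0 h00
  · rw [if_neg hrtop]
    have hrt : 0 < r.toReal := ENNReal.toReal_pos hr0 hrtop
    have key : b ^ r.toReal * volume J ≤ ∫⁻ u, G u ^ r.toReal ∂μI := by
      calc b ^ r.toReal * volume J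
          = ∫⁻ u, J.indicator (fun _ => b ^ r.toReal) u ∂μI := by
            rw [lintegral_indicator hJm, setLIntegral_const, hμJ]
        _ ≤ ∫⁻ u, G u ^ r.toReal ∂μI := by
            apply lintegral_mono
            intro u
            by_cases hu : u ∈ J
            · simpa [Set.indicator_of_mem hu] using ENNReal.rpow_le_rpow (hb u hu) hrt.le
            · simp [Set.indicator_of_notMem hu]
    have h2 := ENNReal.rpow_le_rpow key (by positivity : (0:ℝ) ≤ 1 / r.toReal)
    rw [ENNReal.mul_rpow_of_nonneg _ _ (by positivity), ← ENNReal.rpow_mul,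
      mul_one_div, div_self hrt.ne', ENNReal.rpow_one] at h2
    calc b * volume J ^ (r⁻¹).toReal = b * volume J ^ (1/r.toReal) := by
          rw [ENNReal.toReal_inv, one_div]
      _ ≤ _ := h2

private lemma tavg_lower {γ : ℝ → ℝ} (hγc : ContinuousOn γ (Ioc (0:ℝ) 1))
    {S : Set (ℝ × ℝ)} (hSm : MeasurableSet S) {x : ℝ × ℝ} {u t₁ t₂ : ℝ}
    (ht : t₁ ≤ t₂) (hsub : Icc t₁ t₂ ⊆ Ioc (0:ℝ) 1)
    (hmem : ∀ t ∈ Icc t₁ t₂, (x.1 - u * t, x.2 - u * γ t) ∈ S) :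
    t₂ - t₁ ≤ Tavg γ (S.indicator fun _ => (1:ℝ)) x u := by
  rw [Tavg]
  have hconst : Integrable (fun _ : ℝ => (1:ℝ)) ((volume : Measure ℝ).restrict (Ioc 0 1)) :=
    integrableOn_const measure_Ioc_lt_top.ne
  have hφm : AEMeasurable (fun t : ℝ => (x.1 - u * t, x.2 - u * γ t))
      ((volume : Measure ℝ).restrict (Ioc 0 1)) := by
    apply ContinuousOn.aemeasurable _ measurableSet_Ioc
    exact ContinuousOn.prodMk
      ((continuous_const.sub (continuous_const.mul continuous_id)).continuousOn)
      (continuousOn_const.sub (continuousOn_const.mul hγc))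
  have hmeas : AEStronglyMeasurable
      (fun t : ℝ => (S.indicator fun _ => (1:ℝ)) (x.1 - u * t, x.2 - u * γ t))
      ((volume : Measure ℝ).restrict (Ioc 0 1)) :=
    ((measurable_const.indicator hSm).comp_aemeasurable hφm).aestronglyMeasurable
  have hint : Integrable
      (fun t : ℝ => (S.indicator fun _ => (1:ℝ)) (x.1 - u * t, x.2 - u * γ t))
      ((volume : Measure ℝ).restrict (Ioc 0 1)) := by
    apply hconst.mono' hmeas
    filter_upwards with t
    by_cases h : (x.1 - u * t, x.2 - u * γ t) ∈ S <;>
      simp [Set.indicator_of_mem, Set.indicator_of_notMem, h]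
  have hint2 : Integrable (fun t : ℝ => (Icc t₁ t₂).indicator (fun _ => (1:ℝ)) t)
      ((volume : Measure ℝ).restrict (Ioc 0 1)) := hconst.indicator measurableSet_Icc
  have hle : ∀ t : ℝ, (Icc t₁ t₂).indicator (fun _ => (1:ℝ)) t
      ≤ (S.indicator fun _ => (1:ℝ)) (x.1 - u * t, x.2 - u * γ t) := by
    intro t
    by_cases h : t ∈ Icc t₁ t₂
    · rw [Set.indicator_of_mem h, Set.indicator_of_mem (hmem t h)]
    · rw [Set.indicator_of_notMem h]
      exact Set.indicator_nonneg (fun _ _ => zero_le_one) _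
  have hmain := integral_mono hint2 hint hle
  have hval : ∫ t : ℝ, (Icc t₁ t₂).indicator (fun _ => (1:ℝ)) t
      ∂((volume : Measure ℝ).restrict (Ioc 0 1)) = t₂ - t₁ := by
    rw [integral_indicator measurableSet_Icc, Measure.restrict_restrict measurableSet_Icc,
      setIntegral_const, Set.inter_eq_self_of_subset_left hsub, Real.volume_real_Icc_of_le ht,
      smul_eq_mul, mul_one]
  calc t₂ - t₁ = _ := hval.symm
    _ ≤ _ := hmain

private lemma rb_facts {F : ℝ → ℝ} (hF : Continuous F) {c a b : ℝ} (hc : 0 ≤ c) (hab : a ≤ b) :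
    MeasurableSet (regionBetween (fun y => F y - c) (fun y => F y + c) (Icc a b)) ∧
    (volume : Measure (ℝ × ℝ)) (regionBetween (fun y => F y - c) (fun y => F y + c) (Icc a b))
      = ENNReal.ofReal (2 * c * (b - a)) := by
  have hf : Continuous (fun y => F y - c) := hF.sub continuous_const
  have hg : Continuous (fun y => F y + c) := hF.add continuous_const
  constructor
  · exact measurableSet_regionBetween hf.measurable hg.measurable measurableSet_Icc
  · rw [Measure.volume_eq_prod, volume_regionBetween_eq_integral
      hf.integrableOn_Icc hg.integrableOn_Icc measurableSet_Icc
      (fun y _ => by show F y - c ≤ F y + c; linarith)]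
    congr 1
    rw [show ((fun y => F y + c) - (fun y => F y - c)) = fun _ : ℝ => 2*c from
      by funext y; simp only [Pi.sub_apply]; ring]
    rw [setIntegral_const, Real.volume_real_Icc_of_le hab, smul_eq_mul]
    ring

private lemma gammaBounds {γ : ℝ → ℝ} (hγ : ContDiffOn ℝ 2 γ (Set.Ioc 0 1)) :
    ∃ M : ℝ, 1 ≤ M ∧
      (∀ t ∈ Icc (3/8:ℝ) (5/8), |γ t| ≤ M) ∧
      (∀ s ∈ Icc (3/8:ℝ) (5/8), ∀ t ∈ Icc (3/8:ℝ) (5/8), |γ s - γ t| ≤ M * |s - t|) ∧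
      (∀ t ∈ Icc (3/8:ℝ) (5/8),
        |γ t - γ (1/2) - deriv γ (1/2) * (t - 1/2)| ≤ M * (t - 1/2)^2) := by
  have hO : IsOpen (Ioo (0:ℝ) 1) := isOpen_Ioo
  have hsub : Icc (3/8:ℝ) (5/8) ⊆ Ioo (0:ℝ) 1 := by
    intro t ht
    exact ⟨by linarith [ht.1], by linarith [ht.2]⟩
  have hγO : ContDiffOn ℝ 2 γ (Ioo 0 1) := hγ.mono Ioo_subset_Ioc_self
  have hd1 : ContDiffOn ℝ 1 (deriv γ) (Ioo 0 1) := hγO.deriv_of_isOpen hO (by norm_num)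
  have hcont0 : ContinuousOn γ (Icc (3/8:ℝ) (5/8)) := hγO.continuousOn.mono hsub
  have hcont1 : ContinuousOn (deriv γ) (Icc (3/8:ℝ) (5/8)) := hd1.continuousOn.mono hsub
  have hcont2 : ContinuousOn (deriv (deriv γ)) (Icc (3/8:ℝ) (5/8)) :=
    (hd1.continuousOn_deriv_of_isOpen hO (le_refl 1)).mono hsub
  obtain ⟨M₀, hM₀⟩ := isCompact_Icc.exists_bound_of_continuousOn hcont0
  obtain ⟨M₁, hM₁⟩ := isCompact_Icc.exists_bound_of_continuousOn hcont1
  obtain ⟨M₂, hM₂⟩ := isCompact_Icc.exists_bound_of_continuousOn hcont2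
  have h12 : (1/2:ℝ) ∈ Icc (3/8:ℝ) (5/8) := by norm_num
  have hM₂0 : 0 ≤ M₂ := le_trans (norm_nonneg _) (hM₂ (1/2) h12)
  have hDiff1 : ∀ t ∈ Ioo (0:ℝ) 1, HasDerivAt γ (deriv γ t) t := fun t ht =>
    ((hγO.differentiableOn two_ne_zero).differentiableAt (hO.mem_nhds ht)).hasDerivAt
  have hDiff2 : ∀ t ∈ Ioo (0:ℝ) 1, HasDerivAt (deriv γ) (deriv (deriv γ) t) t := fun t ht =>
    ((hd1.differentiableOn one_ne_zero).differentiableAt (hO.mem_nhds ht)).hasDerivAt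
  set M := max 1 (max M₀ (max M₁ M₂)) with hM
  have hMM₀ : M₀ ≤ M := le_trans (le_max_left _ _) (le_max_right _ _)
  have hMM₁ : M₁ ≤ M := le_trans (le_trans (le_max_left _ _) (le_max_right _ _)) (le_max_right _ _)
  have hMM₂ : M₂ ≤ M := le_trans (le_trans (le_max_right _ _) (le_max_right _ _)) (le_max_right _ _)
  refine ⟨M, le_max_left _ _, ?_, ?_, ?_⟩
  · intro t ht
    exact le_trans (hM₀ t ht) hMM₀
  · intro s hs t ht
    have := Convex.norm_image_sub_le_of_norm_hasDerivWithin_le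
      (f := γ) (f' := deriv γ) (s := Icc (3/8:ℝ) (5/8))
      (fun z hz => (hDiff1 z (hsub hz)).hasDerivWithinAt)
      (fun z hz => hM₁ z hz) (convex_Icc _ _) ht hs
    rw [Real.norm_eq_abs, Real.norm_eq_abs] at this
    calc |γ s - γ t| ≤ M₁ * |s - t| := this
      _ ≤ M * |s - t| := mul_le_mul_of_nonneg_right hMM₁ (abs_nonneg _)
  · intro t ht
    have hLipd : ∀ τ ∈ Icc (3/8:ℝ) (5/8), |deriv γ τ - deriv γ (1/2)| ≤ M₂ * |τ - 1/2| := by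
      intro τ hτ
      have := Convex.norm_image_sub_le_of_norm_hasDerivWithin_le
        (f := deriv γ) (f' := deriv (deriv γ)) (s := Icc (3/8:ℝ) (5/8))
        (fun z hz => (hDiff2 z (hsub hz)).hasDerivWithinAt)
        (fun z hz => hM₂ z hz) (convex_Icc _ _) h12 hτ
      rwa [Real.norm_eq_abs, Real.norm_eq_abs] at this
    have husub : uIcc t (1/2:ℝ) ⊆ Icc (3/8:ℝ) (5/8) := by
      apply Set.uIcc_subset_Icc ht h12
    have hbound : ∀ τ ∈ uIcc t (1/2:ℝ),
        ‖deriv γ τ - deriv γ (1/2)‖ ≤ M₂ * |t - 1/2| := by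
      intro τ hτ
      have h1 := hLipd τ (husub hτ)
      have h2 : |τ - 1/2| ≤ |t - 1/2| := by
        rcases le_total t (1/2:ℝ) with h | h
        · rw [uIcc_of_le h] at hτ
          rw [abs_of_nonpos (by linarith [hτ.2]), abs_of_nonpos (by linarith)]
          linarith [hτ.1]
        · rw [uIcc_of_ge h] at hτ
          rw [abs_of_nonneg (by linarith [hτ.1]), abs_of_nonneg (by linarith)]
          linarith [hτ.2]
      rw [Real.norm_eq_abs]
      calc |deriv γ τ - deriv γ (1/2)| ≤ M₂ * |τ - 1/2| := h1
        _ ≤ M₂ * |t - 1/2| := mul_le_mul_of_nonneg_left h2 hM₂0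
    have hkey := Convex.norm_image_sub_le_of_norm_hasDerivWithin_le
      (f := fun τ => γ τ - deriv γ (1/2) * τ) (f' := fun τ => deriv γ τ - deriv γ (1/2))
      (s := uIcc t (1/2:ℝ))
      (fun z hz => by
        have h := (hDiff1 z (hsub (husub hz))).sub
          ((hasDerivAt_id z).const_mul (deriv γ (1/2)))
        simpa only [mul_one, id, Pi.sub_def] using h.hasDerivWithinAt)
      hbound (convex_uIcc _ _) right_mem_uIcc left_mem_uIcc
    rw [Real.norm_eq_abs, Real.norm_eq_abs] at hkey
    have heq : γ t - deriv γ (1/2) * t - (γ (1/2) - deriv γ (1/2) * (1/2))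
        = γ t - γ (1/2) - deriv γ (1/2) * (t - 1/2) := by ring
    rw [heq] at hkey
    calc |γ t - γ (1/2) - deriv γ (1/2) * (t - 1/2)|
        ≤ M₂ * |t - 1/2| * |t - 1/2| := hkey
      _ = M₂ * (t - 1/2)^2 := by rw [mul_assoc, ← abs_mul, ← sq, abs_of_nonneg (sq_nonneg _)]
      _ ≤ M * (t - 1/2)^2 := mul_le_mul_of_nonneg_right hMM₂ (sq_nonneg _)

/-- The master estimate: a test set `S`, a time window `J`, and for each `u ∈ J`
an `x`-region `E u` on which `Tavg` of the indicator of `S` is at least `a`,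
yield a power inequality. -/
private lemma master {γ : ℝ → ℝ}
    {p q r : ℝ≥0∞} (hp : 1 ≤ p) (hq : 1 ≤ q) (hr : 1 ≤ r) {C : ℝ}
    (hC : ∀ f : ℝ × ℝ → ℝ, MemLp f p volume →
      mixedUX r q (Tavg γ f) ≤ ENNReal.ofReal C * eLpNorm f p volume)
    {S : Set (ℝ × ℝ)} (hSm : MeasurableSet S) {mS : ℝ} (hmS : 0 < mS)
    (hvolS : volume S = ENNReal.ofReal mS)
    {J : Set ℝ} (hJm : MeasurableSet J) (hJs : J ⊆ Icc (1:ℝ) 2) {mJ : ℝ} (hmJ : 0 < mJ)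
    (hvolJ : volume J = ENNReal.ofReal mJ)
    {E : ℝ → Set (ℝ × ℝ)} (hEm : ∀ u ∈ J, MeasurableSet (E u)) {mE : ℝ} (hmE : 0 < mE)
    (hvolE : ∀ u ∈ J, volume (E u) = ENNReal.ofReal mE)
    {a : ℝ} (ha : 0 < a)
    (hTavg : ∀ u ∈ J, ∀ x ∈ E u, a ≤ Tavg γ (S.indicator fun _ => (1:ℝ)) x u) :
    a * mE ^ (q⁻¹).toReal * mJ ^ (r⁻¹).toReal ≤ (max C 1) * mS ^ (p⁻¹).toReal := by
  have hp0 : p ≠ 0 := (lt_of_lt_of_le zero_lt_one hp).ne'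
  have hq0 : q ≠ 0 := (lt_of_lt_of_le zero_lt_one hq).ne'
  set f : ℝ × ℝ → ℝ := S.indicator fun _ => (1:ℝ) with hf
  have hfmem : MemLp f p volume :=
    memLp_indicator_const p hSm 1 (Or.inr (by rw [hvolS]; exact ENNReal.ofReal_ne_top))
  have hS0 : volume S ≠ 0 := by
    rw [hvolS]
    simp [ENNReal.ofReal_eq_zero, not_le, hmS]
  have hRHS : eLpNorm f p volume = ENNReal.ofReal mS ^ (p⁻¹).toReal := by
    rw [hf, eLpNorm_indicator_const' hSm hS0 hp0, hvolS, ENNReal.toReal_inv, one_div]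
    simp
  have hInner : ∀ u ∈ J, ENNReal.ofReal a * ENNReal.ofReal mE ^ (q⁻¹).toReal
      ≤ eLpNorm (fun x => Tavg γ f x u) q volume := by
    intro u hu
    have hE0 : volume (E u) ≠ 0 := by
      rw [hvolE u hu]
      simp [ENNReal.ofReal_eq_zero, not_le, hmE]
    have := inner_lower hq0 (hEm u hu) hE0 ha.le (hTavg u hu)
    rwa [hvolE u hu] at this
  have hJ0 : volume J ≠ 0 := by
    rw [hvolJ]
    simp [ENNReal.ofReal_eq_zero, not_le, hmJ]
  have hOuter := outer_lower hr hJm hJs hJ0 hInner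
  have hchain := hC f hfmem
  have hLHS : ENNReal.ofReal a * ENNReal.ofReal mE ^ (q⁻¹).toReal * volume J ^ (r⁻¹).toReal
      ≤ ENNReal.ofReal C * ENNReal.ofReal mS ^ (p⁻¹).toReal := by
    calc ENNReal.ofReal a * ENNReal.ofReal mE ^ (q⁻¹).toReal * volume J ^ (r⁻¹).toReal
        ≤ eLpNormENN (fun u => eLpNorm (fun x => Tavg γ f x u) q volume) r
            ((volume : Measure ℝ).restrict (Set.Icc 1 2)) := hOuter
      _ = mixedUX r q (Tavg γ f) := rfl
      _ ≤ ENNReal.ofReal C * eLpNorm f p volume := hchain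
      _ = ENNReal.ofReal C * ENNReal.ofReal mS ^ (p⁻¹).toReal := by rw [hRHS]
  rw [hvolJ] at hLHS
  have h2 : ENNReal.ofReal (a * mE ^ (q⁻¹).toReal * mJ ^ (r⁻¹).toReal)
      ≤ ENNReal.ofReal ((max C 1) * mS ^ (p⁻¹).toReal) := by
    calc ENNReal.ofReal (a * mE ^ (q⁻¹).toReal * mJ ^ (r⁻¹).toReal)
        = ENNReal.ofReal a * ENNReal.ofReal mE ^ (q⁻¹).toReal
            * ENNReal.ofReal mJ ^ (r⁻¹).toReal := by
          rw [ENNReal.ofReal_mul (by positivity), ENNReal.ofReal_mul ha.le,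
            ENNReal.ofReal_rpow_of_pos hmE, ENNReal.ofReal_rpow_of_pos hmJ]
      _ ≤ ENNReal.ofReal C * ENNReal.ofReal mS ^ (p⁻¹).toReal := hLHS
      _ ≤ ENNReal.ofReal (max C 1) * ENNReal.ofReal mS ^ (p⁻¹).toReal := by
          gcongr
          exact le_max_left _ _
      _ = ENNReal.ofReal ((max C 1) * mS ^ (p⁻¹).toReal) := by
          rw [ENNReal.ofReal_mul (by positivity), ENNReal.ofReal_rpow_of_pos hmS]
  exact (ENNReal.ofReal_le_ofReal_iff (by positivity)).1 h2

private lemma inv_toReal_le_one {p : ℝ≥0∞} (hp : 1 ≤ p) : (p⁻¹).toReal ≤ 1 := by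
  simpa using ENNReal.toReal_mono ENNReal.one_ne_top (ENNReal.inv_le_one.mpr hp)

private lemma Icc38_subset : Icc (3/8:ℝ) (5/8) ⊆ Set.Ioc (0:ℝ) 1 := by
  intro t ht
  exact ⟨by linarith [ht.1], by linarith [ht.2]⟩

section Examples

variable {γ : ℝ → ℝ} (hγc : ContinuousOn γ (Set.Ioc 0 1)) {M : ℝ} (hM1 : 1 ≤ M)
  (hM0 : ∀ t ∈ Icc (3/8:ℝ) (5/8), |γ t| ≤ M)
  (hLip : ∀ s ∈ Icc (3/8:ℝ) (5/8), ∀ t ∈ Icc (3/8:ℝ) (5/8), |γ s - γ t| ≤ M * |s - t|)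
  (hTay : ∀ t ∈ Icc (3/8:ℝ) (5/8),
      |γ t - γ (1/2) - deriv γ (1/2) * (t - 1/2)| ≤ M * (t - 1/2)^2)
  {p q r : ℝ≥0∞} (hp : 1 ≤ p) (hq : 1 ≤ q) (hr : 1 ≤ r) {C : ℝ}
  (hC : ∀ f : ℝ × ℝ → ℝ, MemLp f p volume →
      mixedUX r q (Tavg γ f) ≤ ENNReal.ofReal C * eLpNorm f p volume)

include hγc hM1 hLip hp hq hr hC in
set_option maxHeartbeats 1000000 in
private lemma keyB : 2 * (p⁻¹).toReal ≤ 1 + (q⁻¹).toReal := by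
  classical
  set ghat : ℝ → ℝ := fun τ => γ (max (3/8) (min (5/8) τ)) with hghatdef
  have hproj : ∀ τ : ℝ, max (3/8:ℝ) (min (5/8) τ) ∈ Icc (3/8:ℝ) (5/8) := by
    intro τ
    exact ⟨le_max_left _ _, max_le (by norm_num) (min_le_left _ _)⟩
  have hghat : Continuous ghat := by
    apply ContinuousOn.comp_continuous (hγc.mono Icc38_subset)
    · exact continuous_const.max (continuous_const.min continuous_id)
    · exact hproj
  have hghat_eq : ∀ τ ∈ Icc (3/8:ℝ) (5/8), ghat τ = γ τ := by
    intro τ hτ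
    simp only [hghatdef]
    rw [min_eq_right hτ.2, max_eq_right hτ.1]
  have hip1 : (p⁻¹).toReal ≤ 1 := inv_toReal_le_one hp
  have hiq1 : (q⁻¹).toReal ≤ 1 := inv_toReal_le_one hq
  have hiq0 : 0 ≤ (q⁻¹).toReal := ENNReal.toReal_nonneg
  have hip0 : 0 ≤ (p⁻¹).toReal := ENNReal.toReal_nonneg
  set iq := (q⁻¹).toReal with hiqdef
  set ip := (p⁻¹).toReal with hipdef
  have hKpos : 0 < max C 1 * (2+4*M) := by
    apply mul_pos (lt_of_lt_of_le zero_lt_one (le_max_right _ _))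
    linarith
  have key : ∀ δ : ℝ, δ ∈ Ioo (0:ℝ) (1/64) →
      (1/16) * δ ^ (1 + iq) ≤ (max C 1 * (2+4*M)) * δ ^ (2*ip) := by
    intro δ hδ
    obtain ⟨hδ0, hδ64⟩ := hδ
    set S : Set (ℝ×ℝ) := Icc (0:ℝ) δ ×ˢ Icc (-((1+2*M)*δ)) ((1+2*M)*δ) with hSdef
    have hSm : MeasurableSet S := measurableSet_Icc.prod measurableSet_Icc
    have hvolS : volume S = ENNReal.ofReal ((2+4*M)*δ^2) := by
      rw [hSdef, Measure.volume_eq_prod, Measure.prod_prod, Real.volume_Icc, Real.volume_Icc,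
        ← ENNReal.ofReal_mul (by linarith)]
      congr 1
      ring
    set Efun : ℝ → Set (ℝ×ℝ) := fun u => regionBetween
      (fun x₁ => u * ghat (x₁/u) - δ) (fun x₁ => u * ghat (x₁/u) + δ)
      (Icc (u*(7/16)) (u*(7/16)+1/16)) with hEdef
    have hEfacts : ∀ u : ℝ, MeasurableSet (Efun u) ∧ volume (Efun u) = ENNReal.ofReal (δ/8) := by
      intro u
      have hF : Continuous (fun x₁ : ℝ => u * ghat (x₁/u)) :=
        continuous_const.mul (hghat.comp (continuous_id.div_const u))
      have hrb := rb_facts hF (c := δ) hδ0.le (by linarith : u*(7/16) ≤ u*(7/16)+1/16)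
      refine ⟨hrb.1, ?_⟩
      rw [hrb.2]
      congr 1
      ring
    have hTavg : ∀ u ∈ Icc (1:ℝ) 2, ∀ x ∈ Efun u,
        δ/2 ≤ Tavg γ (S.indicator fun _ => (1:ℝ)) x u := by
      intro u hu x hx
      obtain ⟨hu1, hu2⟩ := hu
      have hu0 : (0:ℝ) < u := by linarith
      simp only [hEdef, regionBetween, mem_setOf_eq, mem_Icc, mem_Ioo] at hx
      obtain ⟨⟨hx1a, hx1b⟩, hx2a, hx2b⟩ := hx
      have ht2a : 7/16 ≤ x.1/u := (le_div_iff₀ hu0).2 (by nlinarith)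
      have ht2b : x.1/u ≤ 1/2 := (div_le_iff₀ hu0).2 (by nlinarith)
      have hδu : δ/u ≤ δ := by
        rw [div_le_iff₀ hu0]
        nlinarith
      have hδu0 : 0 < δ/u := div_pos hδ0 hu0
      have hx1umem : x.1/u ∈ Icc (3/8:ℝ) (5/8) := ⟨by linarith, by linarith⟩
      have hgg : ghat (x.1/u) = γ (x.1/u) := hghat_eq _ hx1umem
      rw [hgg] at hx2a hx2b
      have hlen : x.1/u - (x.1-δ)/u = δ/u := by field_simp; ring
      have hwle : (x.1-δ)/u ≤ x.1/u := by linarith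
      have hsub : Icc ((x.1-δ)/u) (x.1/u) ⊆ Set.Ioc (0:ℝ) 1 := by
        intro t ht
        obtain ⟨hta, htb⟩ := ht
        constructor
        · have : x.1/u - δ/u ≤ t := by linarith
          linarith
        · linarith
      have hmem : ∀ t ∈ Icc ((x.1-δ)/u) (x.1/u),
          (x.1 - u * t, x.2 - u * γ t) ∈ S := by
        intro t ht
        obtain ⟨hta, htb⟩ := ht
        have htmem : t ∈ Icc (3/8:ℝ) (5/8) := by
          constructor
          · have : x.1/u - δ/u ≤ t := by linarith
            linarith
          · linarith
        have hut1 : t*u ≤ x.1 := (le_div_iff₀ hu0).1 htb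
        have hut2 : x.1 - δ ≤ t*u := (div_le_iff₀ hu0).1 hta
        have hmc : t*u = u*t := mul_comm _ _
        have hA : |x.2 - u*γ (x.1/u)| ≤ δ := abs_le.2 ⟨by linarith, by linarith⟩
        have htt : |x.1/u - t| ≤ δ := by
          rw [abs_le]
          constructor
          · linarith
          · linarith
        have hB : |γ (x.1/u) - γ t| ≤ M*δ :=
          le_trans (hLip _ hx1umem _ htmem) (mul_le_mul_of_nonneg_left htt (by linarith))
        have habs : |x.2 - u*γ t| ≤ (1+2*M)*δ := by
          have hsplit : x.2 - u*γ t = (x.2 - u*γ (x.1/u)) + u*(γ (x.1/u) - γ t) := by ring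
          calc |x.2 - u*γ t| = |(x.2 - u*γ (x.1/u)) + u*(γ (x.1/u) - γ t)| := by rw [hsplit]
            _ ≤ |x.2 - u*γ (x.1/u)| + |u*(γ (x.1/u) - γ t)| := abs_add_le _ _
            _ = |x.2 - u*γ (x.1/u)| + u*|γ (x.1/u) - γ t| := by
                rw [abs_mul, abs_of_pos hu0]
            _ ≤ δ + 2*(M*δ) := by
                have habs0 : 0 ≤ |γ (x.1/u) - γ t| := abs_nonneg _
                nlinarith
            _ = (1+2*M)*δ := by ring
        have habs2 := abs_le.1 habs
        rw [hSdef, Set.mem_prod]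
        constructor
        · show x.1 - u*t ∈ Icc (0:ℝ) δ
          rw [mem_Icc]
          exact ⟨by linarith, by linarith⟩
        · show x.2 - u*γ t ∈ Icc (-((1+2*M)*δ)) ((1+2*M)*δ)
          rw [mem_Icc]
          exact ⟨by linarith [habs2.1], by linarith [habs2.2]⟩
      have hTlow := tavg_lower hγc hSm (x := x) (u := u) hwle hsub hmem
      calc δ/2 ≤ δ/u := by
            rw [div_le_div_iff₀ (by norm_num : (0:ℝ) < 2) hu0]
            nlinarith
        _ = x.1/u - (x.1-δ)/u := hlen.symm
        _ ≤ _ := hTlow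
    have hmaster := master (J := Icc (1:ℝ) 2) (E := Efun) (mJ := (1:ℝ))
      (mS := (2+4*M)*δ^2) (mE := δ/8) (a := δ/2)
      hp hq hr hC hSm (by nlinarith) hvolS measurableSet_Icc Subset.rfl one_pos
      (by rw [Real.volume_Icc]; norm_num)
      (fun u _ => (hEfacts u).1) (by linarith) (fun u _ => (hEfacts u).2)
      (by linarith) hTavg
    rw [Real.one_rpow, mul_one] at hmaster
    have hL1 : (1/16) * δ ^ (1 + iq) ≤ δ/2 * (δ/8) ^ iq := by
      have h1 : (δ/8:ℝ) ^ iq = δ ^ iq * (1/8:ℝ) ^ iq := by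
        rw [show (δ/8:ℝ) = δ * (1/8) from by ring, Real.mul_rpow hδ0.le (by norm_num)]
      have h2 : (1/8:ℝ) ≤ (1/8:ℝ) ^ iq := self_le_rpow' (by norm_num) (by norm_num) hiq1
      have h3 : δ ^ (1+iq) = δ * δ ^ iq := by
        rw [Real.rpow_add hδ0, Real.rpow_one]
      have h4 : (0:ℝ) ≤ δ ^ iq := Real.rpow_nonneg hδ0.le _
      rw [h1, h3]
      nlinarith [mul_le_mul_of_nonneg_left h2 (mul_nonneg hδ0.le h4)]
    have hR1 : max C 1 * ((2+4*M)*δ^2) ^ ip ≤ (max C 1 * (2+4*M)) * δ ^ (2*ip) := by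
      have h1 : ((2+4*M)*δ^2:ℝ) ^ ip = (2+4*M) ^ ip * (δ^2) ^ ip :=
        Real.mul_rpow (by linarith) (by positivity)
      have h2 : (2+4*M:ℝ) ^ ip ≤ 2+4*M := rpow_le_self' (by linarith) hip1
      have h3 : ((δ^2:ℝ)) ^ ip = δ ^ (2*ip) := by
        rw [rpow_nat_mul' hδ0.le 2 ip]
        norm_num
      have h5 : (0:ℝ) < max C 1 := lt_of_lt_of_le zero_lt_one (le_max_right _ _)
      rw [h1, h3, ← mul_assoc]
      exact mul_le_mul_of_nonneg_right
        (mul_le_mul_of_nonneg_left h2 h5.le) (Real.rpow_nonneg hδ0.le _)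
    calc (1/16) * δ^(1+iq) ≤ δ/2 * (δ/8)^iq := hL1
      _ ≤ max C 1 * ((2+4*M)*δ^2)^ip := hmaster
      _ ≤ _ := hR1
  exact exponent_le (by norm_num) hKpos key

include hγc hM1 hTay hp hq hr hC in
set_option maxHeartbeats 1000000 in
private lemma keyK : 3 * (p⁻¹).toReal ≤ 1 + 3 * (q⁻¹).toReal := by
  classical
  set d : ℝ := deriv γ (1/2) with hddef
  have hip1 : (p⁻¹).toReal ≤ 1 := inv_toReal_le_one hp
  have hiq1 : (q⁻¹).toReal ≤ 1 := inv_toReal_le_one hq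
  have hiq0 : 0 ≤ (q⁻¹).toReal := ENNReal.toReal_nonneg
  have hip0 : 0 ≤ (p⁻¹).toReal := ENNReal.toReal_nonneg
  set iq := (q⁻¹).toReal with hiqdef
  set ip := (p⁻¹).toReal with hipdef
  have hKpos : 0 < max C 1 * (2+4*M) := by
    apply mul_pos (lt_of_lt_of_le zero_lt_one (le_max_right _ _))
    linarith
  have key : ∀ δ : ℝ, δ ∈ Ioo (0:ℝ) (1/64) →
      (1/4) * δ ^ (1 + 3*iq) ≤ (max C 1 * (2+4*M)) * δ ^ (3*ip) := by
    intro δ hδ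
    obtain ⟨hδ0, hδ64⟩ := hδ
    set S : Set (ℝ×ℝ) := regionBetween (fun y => d*y - (1+2*M)*δ^2)
      (fun y => d*y + (1+2*M)*δ^2) (Icc (0:ℝ) δ) with hSdef
    have hFS : Continuous (fun y : ℝ => d*y) := continuous_const.mul continuous_id
    have hrbS := rb_facts hFS (c := (1+2*M)*δ^2)
      (mul_pos (by linarith : (0:ℝ) < 1+2*M) (by positivity)).le hδ0.le
    have hSm : MeasurableSet S := hrbS.1
    have hvolS : volume S = ENNReal.ofReal ((2+4*M)*δ^3) := by
      rw [hSdef, hrbS.2]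
      congr 1
      ring
    set Efun : ℝ → Set (ℝ×ℝ) := fun u => regionBetween
      (fun z => (u*γ (1/2) + d*(z - u*(1/2))) - δ^2)
      (fun z => (u*γ (1/2) + d*(z - u*(1/2))) + δ^2)
      (Icc (u*(1/2)+δ/4) (u*(1/2)+δ/2)) with hEdef
    have hEfacts : ∀ u : ℝ, MeasurableSet (Efun u)
        ∧ volume (Efun u) = ENNReal.ofReal (δ^3/2) := by
      intro u
      have hF : Continuous (fun z : ℝ => u*γ (1/2) + d*(z - u*(1/2))) :=
        continuous_const.add (continuous_const.mul (continuous_id.sub continuous_const))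
      have hrb := rb_facts hF (c := δ^2) (by positivity)
        (by linarith : u*(1/2)+δ/4 ≤ u*(1/2)+δ/2)
      refine ⟨hrb.1, ?_⟩
      rw [hrb.2]
      congr 1
      ring
    have hTavg : ∀ u ∈ Icc (1:ℝ) 2, ∀ x ∈ Efun u,
        δ/2 ≤ Tavg γ (S.indicator fun _ => (1:ℝ)) x u := by
      intro u hu x hx
      obtain ⟨hu1, hu2⟩ := hu
      have hu0 : (0:ℝ) < u := by linarith
      simp only [hEdef, regionBetween, mem_setOf_eq, mem_Icc, mem_Ioo] at hx
      obtain ⟨⟨hx1a, hx1b⟩, hx2a, hx2b⟩ := hx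
      have he1a : δ/4 ≤ x.1 - u*(1/2) := by linarith
      have he1b : x.1 - u*(1/2) ≤ δ/2 := by linarith
      set e1 : ℝ := x.1 - u*(1/2) with he1def
      clear_value e1
      have hmul : δ*1 ≤ δ*u := mul_le_mul_of_nonneg_left hu1 hδ0.le
      have hda : -δ ≤ (e1-δ)/u := by
        rw [le_div_iff₀ hu0]
        nlinarith [hmul]
      have hdb : e1/u ≤ δ/2 := by
        rw [div_le_iff₀ hu0]
        nlinarith [hmul]
      have hdc : 0 ≤ e1/u := div_nonneg (by linarith) hu0.le
      have hlen : (1/2 + e1/u) - (1/2 + (e1-δ)/u) = δ/u := by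
        field_simp
        ring
      have hδu : δ/u ≤ δ := by
        rw [div_le_iff₀ hu0]
        nlinarith
      have hδu0 : 0 < δ/u := div_pos hδ0 hu0
      have hwle : 1/2 + (e1-δ)/u ≤ 1/2 + e1/u := by linarith
      have hsub : Icc (1/2 + (e1-δ)/u) (1/2 + e1/u) ⊆ Set.Ioc (0:ℝ) 1 := by
        intro t ht
        obtain ⟨hta, htb⟩ := ht
        exact ⟨by linarith, by linarith⟩
      have hmem : ∀ t ∈ Icc (1/2 + (e1-δ)/u) (1/2 + e1/u),
          (x.1 - u * t, x.2 - u * γ t) ∈ S := by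
        intro t ht
        obtain ⟨hta, htb⟩ := ht
        have htmem : t ∈ Icc (3/8:ℝ) (5/8) := ⟨by linarith, by linarith⟩
        have htd : |t - 1/2| ≤ δ := abs_le.2 ⟨by linarith, by linarith⟩
        have htsq : (t-1/2)^2 ≤ δ^2 := by nlinarith [abs_le.1 htd]
        have hut1 : (t-1/2)*u ≤ e1 := (le_div_iff₀ hu0).1 (by linarith)
        have hut2 : e1 - δ ≤ (t-1/2)*u := (div_le_iff₀ hu0).1 (by linarith)
        have hmc : (t-1/2)*u = u*t - u*(1/2) := by ring
        have hTayt := hTay t htmem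
        have hTb : |u*(γ t - γ (1/2) - d*(t-1/2))| ≤ 2*M*δ^2 := by
          rw [abs_mul, abs_of_pos hu0]
          have h0 : |γ t - γ (1/2) - d*(t-1/2)| ≤ M*δ^2 := by
            calc |γ t - γ (1/2) - d*(t-1/2)| ≤ M*(t-1/2)^2 := hTayt
              _ ≤ M*δ^2 := by nlinarith
          nlinarith [abs_nonneg (γ t - γ (1/2) - d*(t-1/2))]
        have hTb2 := abs_le.1 hTb
        have hsplit : (x.2 - u*γ t) - d*(x.1 - u*t)
            = (x.2 - (u*γ (1/2) + d*e1)) - u*(γ t - γ (1/2) - d*(t-1/2)) := by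
          rw [he1def]
          ring
        rw [hSdef]
        simp only [regionBetween, mem_setOf_eq, mem_Icc, mem_Ioo]
        refine ⟨⟨by linarith, by linarith⟩, by nlinarith [hTb2.1], by nlinarith [hTb2.2]⟩
      have hTlow := tavg_lower hγc hSm (x := x) (u := u) hwle hsub hmem
      calc δ/2 ≤ δ/u := by
            rw [div_le_div_iff₀ (by norm_num : (0:ℝ) < 2) hu0]
            nlinarith
        _ = (1/2 + e1/u) - (1/2 + (e1-δ)/u) := hlen.symm
        _ ≤ _ := hTlow
    have hmaster := master (J := Icc (1:ℝ) 2) (E := Efun) (mJ := (1:ℝ))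
      (mS := (2+4*M)*δ^3) (mE := δ^3/2) (a := δ/2)
      hp hq hr hC hSm (mul_pos (by linarith : (0:ℝ) < 2+4*M) (by positivity)) hvolS
      measurableSet_Icc Subset.rfl one_pos
      (by rw [Real.volume_Icc]; norm_num)
      (fun u _ => (hEfacts u).1) (by positivity) (fun u _ => (hEfacts u).2)
      (by linarith) hTavg
    rw [Real.one_rpow, mul_one] at hmaster
    have hL1 : (1/4) * δ ^ (1 + 3*iq) ≤ δ/2 * (δ^3/2) ^ iq := by
      have h1 : (δ^3/2:ℝ) ^ iq = (δ^3) ^ iq * (1/2:ℝ) ^ iq := by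
        rw [show (δ^3/2:ℝ) = δ^3 * (1/2) from by ring,
          Real.mul_rpow (by positivity) (by norm_num)]
      have h2 : (1/2:ℝ) ≤ (1/2:ℝ) ^ iq := self_le_rpow' (by norm_num) (by norm_num) hiq1
      have h3 : ((δ^3:ℝ)) ^ iq = δ ^ (3*iq) := by
        rw [rpow_nat_mul' hδ0.le 3 iq]
        norm_num
      have h4 : δ ^ (1+3*iq) = δ * δ ^ (3*iq) := by
        rw [Real.rpow_add hδ0, Real.rpow_one]
      have h5 : (0:ℝ) ≤ δ ^ (3*iq) := Real.rpow_nonneg hδ0.le _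
      rw [h1, h3, h4]
      nlinarith [mul_le_mul_of_nonneg_left h2 (mul_nonneg hδ0.le h5)]
    have hR1 : max C 1 * ((2+4*M)*δ^3) ^ ip ≤ (max C 1 * (2+4*M)) * δ ^ (3*ip) := by
      have h1 : ((2+4*M)*δ^3:ℝ) ^ ip = (2+4*M) ^ ip * (δ^3) ^ ip :=
        Real.mul_rpow (by linarith) (by positivity)
      have h2 : (2+4*M:ℝ) ^ ip ≤ 2+4*M := rpow_le_self' (by linarith) hip1
      have h3 : ((δ^3:ℝ)) ^ ip = δ ^ (3*ip) := by
        rw [rpow_nat_mul' hδ0.le 3 ip]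
        norm_num
      have h5 : (0:ℝ) < max C 1 := lt_of_lt_of_le zero_lt_one (le_max_right _ _)
      rw [h1, h3, ← mul_assoc]
      exact mul_le_mul_of_nonneg_right
        (mul_le_mul_of_nonneg_left h2 h5.le) (Real.rpow_nonneg hδ0.le _)
    calc (1/4) * δ^(1+3*iq) ≤ δ/2 * (δ^3/2)^iq := hL1
      _ ≤ max C 1 * ((2+4*M)*δ^3)^ip := hmaster
      _ ≤ _ := hR1
  exact exponent_le (by norm_num) hKpos key

include hγc hM1 hM0 hLip hp hq hr hC in
set_option maxHeartbeats 1000000 in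
private lemma keyA : (p⁻¹).toReal ≤ 2 * (q⁻¹).toReal + (r⁻¹).toReal := by
  classical
  set ghat : ℝ → ℝ := fun τ => γ (max (3/8) (min (5/8) τ)) with hghatdef
  have hproj : ∀ τ : ℝ, max (3/8:ℝ) (min (5/8) τ) ∈ Icc (3/8:ℝ) (5/8) := by
    intro τ
    exact ⟨le_max_left _ _, max_le (by norm_num) (min_le_left _ _)⟩
  have hghat : Continuous ghat := by
    apply ContinuousOn.comp_continuous (hγc.mono Icc38_subset)
    · exact continuous_const.max (continuous_const.min continuous_id)
    · exact hproj
  have hghat_eq : ∀ τ ∈ Icc (3/8:ℝ) (5/8), ghat τ = γ τ := by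
    intro τ hτ
    simp only [hghatdef]
    rw [min_eq_right hτ.2, max_eq_right hτ.1]
  have hip1 : (p⁻¹).toReal ≤ 1 := inv_toReal_le_one hp
  have hiq1 : (q⁻¹).toReal ≤ 1 := inv_toReal_le_one hq
  have hiq0 : 0 ≤ (q⁻¹).toReal := ENNReal.toReal_nonneg
  have hip0 : 0 ≤ (p⁻¹).toReal := ENNReal.toReal_nonneg
  have hir0 : 0 ≤ (r⁻¹).toReal := ENNReal.toReal_nonneg
  set iq := (q⁻¹).toReal with hiqdef
  set ip := (p⁻¹).toReal with hipdef
  set ir := (r⁻¹).toReal with hirdef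
  have hKpos : 0 < max C 1 * ((1+3*M)/2) := by
    apply mul_pos (lt_of_lt_of_le zero_lt_one (le_max_right _ _))
    linarith
  have key : ∀ δ : ℝ, δ ∈ Ioo (0:ℝ) (1/64) →
      (1/8) * δ ^ (2*iq + ir) ≤ (max C 1 * ((1+3*M)/2)) * δ ^ ip := by
    intro δ hδ
    obtain ⟨hδ0, hδ64⟩ := hδ
    set S : Set (ℝ×ℝ) := regionBetween (fun y => (- ghat (-y)) - (1+3*M)*δ)
      (fun y => (- ghat (-y)) + (1+3*M)*δ) (Icc (-(5/8):ℝ) (-(3/8))) with hSdef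
    have hFS : Continuous (fun y : ℝ => - ghat (-y)) :=
      ((hghat.comp continuous_neg).neg : Continuous fun y : ℝ => - ghat (-y))
    have hrbS := rb_facts hFS (c := (1+3*M)*δ)
      (mul_pos (by linarith : (0:ℝ) < 1+3*M) hδ0).le
      (by norm_num : (-(5/8):ℝ) ≤ -(3/8))
    have hSm : MeasurableSet S := hrbS.1
    have hvolS : volume S = ENNReal.ofReal (((1+3*M)/2)*δ) := by
      rw [hSdef, hrbS.2]
      congr 1
      ring
    set Efun : ℝ → Set (ℝ×ℝ) := fun _ => Ioo (-δ) δ ×ˢ Ioo (-δ) δ with hEdef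
    have hEm : ∀ u : ℝ, MeasurableSet (Efun u) := fun _ =>
      measurableSet_Ioo.prod measurableSet_Ioo
    have hvolE : ∀ u : ℝ, volume (Efun u) = ENNReal.ofReal (4*δ^2) := by
      intro u
      rw [hEdef, Measure.volume_eq_prod, Measure.prod_prod, Real.volume_Ioo,
        ← ENNReal.ofReal_mul (by linarith)]
      congr 1
      ring
    have hTavg : ∀ u ∈ Icc (1:ℝ) (1+δ), ∀ x ∈ Efun u,
        (1/8:ℝ) ≤ Tavg γ (S.indicator fun _ => (1:ℝ)) x u := by
      intro u hu x hx
      obtain ⟨hu1, hu2⟩ := hu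
      have hu0 : (0:ℝ) < u := by linarith
      simp only [hEdef, Set.mem_prod, mem_Ioo] at hx
      obtain ⟨⟨hx1a, hx1b⟩, hx2a, hx2b⟩ := hx
      have hsub : Icc (7/16:ℝ) (9/16) ⊆ Set.Ioc (0:ℝ) 1 := by
        intro t ht
        exact ⟨by linarith [ht.1], by linarith [ht.2]⟩
      have hmem : ∀ t ∈ Icc (7/16:ℝ) (9/16),
          (x.1 - u * t, x.2 - u * γ t) ∈ S := by
        intro t ht
        obtain ⟨hta, htb⟩ := ht
        have htmem : t ∈ Icc (3/8:ℝ) (5/8) := ⟨by linarith, by linarith⟩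
        have hu1t : 0 ≤ (u-1)*t := mul_nonneg (by linarith) (by linarith)
        have hu1t2 : (u-1)*t ≤ δ := by nlinarith
        have hwmem : u*t - x.1 ∈ Icc (3/8:ℝ) (5/8) := by
          constructor
          · nlinarith
          · nlinarith
        have hgg : ghat (u*t - x.1) = γ (u*t - x.1) := hghat_eq _ hwmem
        have hwt : |(u*t - x.1) - t| ≤ 2*δ := by
          rw [abs_le]
          constructor
          · nlinarith
          · nlinarith
        have hB : |γ (u*t - x.1) - γ t| ≤ 2*M*δ := by
          calc |γ (u*t - x.1) - γ t| ≤ M * |(u*t - x.1) - t| := hLip _ hwmem _ htmem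
            _ ≤ M * (2*δ) := mul_le_mul_of_nonneg_left hwt (by linarith)
            _ = 2*M*δ := by ring
        have hB2 := abs_le.1 hB
        have hU : |(1-u)*γ t| ≤ M*δ := by
          rw [abs_mul]
          have h1 : |1-u| ≤ δ := by
            rw [abs_le]
            constructor <;> linarith
          have h2 : |γ t| ≤ M := hM0 t htmem
          calc |1-u| * |γ t| ≤ δ * M :=
                mul_le_mul h1 h2 (abs_nonneg _) hδ0.le
            _ = M*δ := by ring
        have hU2 := abs_le.1 hU
        have hsplit : x.2 - u*γ t - (- γ (u*t - x.1))
            = x.2 + (γ (u*t - x.1) - γ t) + (1-u)*γ t := by ring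
        rw [hSdef]
        simp only [regionBetween, mem_setOf_eq, mem_Icc, mem_Ioo]
        constructor
        · constructor
          · linarith [hwmem.2]
          · linarith [hwmem.1]
        · rw [(by ring : -(x.1 - u*t) = u*t - x.1), hgg]
          constructor
          · nlinarith
          · nlinarith
      have hTlow := tavg_lower hγc hSm (x := x) (u := u)
        (by norm_num : (7/16:ℝ) ≤ 9/16) hsub hmem
      calc (1/8:ℝ) = 9/16 - 7/16 := by norm_num
        _ ≤ _ := hTlow
    have hmaster := master (J := Icc (1:ℝ) (1+δ)) (E := Efun) (mJ := δ)
      (mS := ((1+3*M)/2)*δ) (mE := 4*δ^2) (a := (1/8:ℝ))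
      hp hq hr hC hSm (mul_pos (by linarith : (0:ℝ) < (1+3*M)/2) hδ0) hvolS measurableSet_Icc
      (Icc_subset_Icc le_rfl (by linarith)) hδ0
      (by rw [Real.volume_Icc]; congr 1; ring)
      (fun u _ => hEm u) (by positivity) (fun u _ => hvolE u)
      (by norm_num) hTavg
    have hL1 : (1/8) * δ ^ (2*iq + ir) ≤ (1/8) * (4*δ^2) ^ iq * δ ^ ir := by
      have h0 : ((δ^2:ℝ)) ^ iq ≤ (4*δ^2) ^ iq :=
        Real.rpow_le_rpow (by positivity) (by nlinarith) hiq0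
      have h3 : ((δ^2:ℝ)) ^ iq = δ ^ (2*iq) := by
        rw [rpow_nat_mul' hδ0.le 2 iq]
        norm_num
      have h4 : δ ^ (2*iq+ir) = δ ^ (2*iq) * δ ^ ir := Real.rpow_add hδ0 _ _
      rw [h4, ← h3]
      have h5 : (0:ℝ) ≤ δ ^ ir := Real.rpow_nonneg hδ0.le _
      nlinarith [h0, h5, Real.rpow_nonneg (show (0:ℝ) ≤ δ^2 by positivity) iq]
    have hR1 : max C 1 * (((1+3*M)/2)*δ) ^ ip ≤ (max C 1 * ((1+3*M)/2)) * δ ^ ip := by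
      have h1 : ((((1+3*M)/2))*δ:ℝ) ^ ip = ((1+3*M)/2) ^ ip * δ ^ ip :=
        Real.mul_rpow (by linarith) hδ0.le
      have h2 : ((1+3*M)/2:ℝ) ^ ip ≤ (1+3*M)/2 := rpow_le_self' (by linarith) hip1
      have h5 : (0:ℝ) < max C 1 := lt_of_lt_of_le zero_lt_one (le_max_right _ _)
      rw [h1, ← mul_assoc]
      exact mul_le_mul_of_nonneg_right
        (mul_le_mul_of_nonneg_left h2 h5.le) (Real.rpow_nonneg hδ0.le _)
    calc (1/8) * δ^(2*iq+ir) ≤ (1/8) * (4*δ^2)^iq * δ^ir := hL1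
      _ ≤ max C 1 * (((1+3*M)/2)*δ)^ip := hmaster
      _ ≤ _ := hR1
  exact exponent_le (by norm_num) hKpos key

end Examples

/-- Theorem 1.5, necessary condition (IV): if the time-space estimate
`L^p_x → L^r_u L^q_x` holds for `T`, then
`1/q ≥ max{1/(2p) - 1/(2r), 2/p - (r+1)/r}` and
`max{1/r - 1/q, 0} ≥ s̃_{A,0}(p,q,q)`. -/
theorem timeSpace_necessity_IV :
    ∃ N : ℕ, ∀ γ : ℝ → ℝ, CurveHyp γ N →
      ∀ p q r : ℝ≥0∞, 1 ≤ p → 1 ≤ q → 1 ≤ r →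
      (∃ C : ℝ, ∀ f : ℝ × ℝ → ℝ, MemLp f p volume →
        mixedUX r q (Tavg γ f) ≤ ENNReal.ofReal C * eLpNorm f p volume) →
      max ((p⁻¹).toReal / 2 - (r⁻¹).toReal / 2)
          (2 * (p⁻¹).toReal - (1 + (r⁻¹).toReal)) ≤ (q⁻¹).toReal ∧
      sA0qq (p⁻¹).toReal (q⁻¹).toReal ≤ max ((r⁻¹).toReal - (q⁻¹).toReal) 0 := by
  refine ⟨2, ?_⟩
  intro γ hyp p q r hp hq hr hEst
  obtain ⟨C, hC⟩ := hEst
  have hγ2 : ContDiffOn ℝ 2 γ (Set.Ioc 0 1) := by exact_mod_cast hyp.1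
  obtain ⟨M, hM1, hM0, hLip, hTay⟩ := gammaBounds hγ2
  have hγc : ContinuousOn γ (Set.Ioc (0:ℝ) 1) := hγ2.continuousOn
  have hA := keyA hγc hM1 hM0 hLip hp hq hr hC
  have hB := keyB hγc hM1 hLip hp hq hr hC
  have hK := keyK hγc hM1 hTay hp hq hr hC
  have hir0 : 0 ≤ (r⁻¹).toReal := ENNReal.toReal_nonneg
  have hiq0 : 0 ≤ (q⁻¹).toReal := ENNReal.toReal_nonneg
  constructor
  · apply max_le
    · linarith
    · linarith
  · have hmax1 : (r⁻¹).toReal - (q⁻¹).toReal ≤ max ((r⁻¹).toReal - (q⁻¹).toReal) 0 :=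
      le_max_left _ _
    have hmax2 : (0:ℝ) ≤ max ((r⁻¹).toReal - (q⁻¹).toReal) 0 := le_max_right _ _
    rw [sA0qq]
    split_ifs with h1 h2
    · linarith
    · linarith
    · linarith

end
end

section
/- Let q, r ∈ [1,∞]. Let G : ℝ² × ℝ → ℂ be measurable such that for every x ∈ ℝ² the function u ↦ G(x,u) is continuously differentiable and compactly supported in the interval (1/2, 5/2), ∂_uG is measurable, G(·,u) ∈ L^q(ℝ²) and ∂_uG(·,u) ∈ L^q(ℝ²) for every u ∈ ℝ, and there exists H ∈ L^q(ℝ²) with |∂_uG(x,u)| ≤ H(x) for all (x,u). Then there is a constant C, depending only on q and r, such that ‖G‖_{L^∞_u L^q_x(ℝ²×ℝ)} ≤ C · ‖G‖_{L^r_u L^q_x(ℝ²×ℝ)}^{1/r′} · ‖∂_uG‖_{L^r_u L^q_x(ℝ²×ℝ)}^{1/r}, where r′ is the conjugate exponent of r (1/r + 1/r′ = 1, with the conventions 1/∞ = 0 and a^0 = 1). -/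
open MeasureTheory Filter Set
open scoped ENNReal NNReal

noncomputable section

/-- The time-space mixed norm `‖F‖_{L^r_u L^q_x(ℝ² × ℝ)}` (over the full line in `u`). -/
def mixedUXfull (r q : ℝ≥0∞) (F : ℝ × ℝ → ℝ → ℂ) : ℝ≥0∞ :=
  eLpNormENN (fun u => eLpNorm (fun x => F x u) q (volume : Measure (ℝ × ℝ))) r
    (volume : Measure ℝ)

lemma meas_slice_lintegral (f : (ℝ × ℝ) × ℝ → ℝ≥0∞) (hf : Measurable f) (ν : Measure (ℝ×ℝ)) [SFinite ν] :
    Measurable fun t : ℝ => ∫⁻ x, f (x, t) ∂ν :=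
  (hf.comp measurable_swap).lintegral_prod_right'

lemma meas_slice_essSup (f : (ℝ × ℝ) × ℝ → ℝ≥0∞) (hf : Measurable f) :
    Measurable fun t : ℝ => essSup (fun x => f (x, t)) (volume : Measure (ℝ × ℝ)) := by
  have hm : ∀ c : ℚ, Measurable fun t : ℝ =>
      (volume : Measure (ℝ × ℝ)) ((fun x => (x, t)) ⁻¹' {p | ENNReal.ofReal (c:ℝ) < f p}) :=
    fun c => measurable_measure_prodMk_right (measurableSet_lt measurable_const hf)
  have key : (fun t : ℝ => essSup (fun x => f (x, t)) (volume : Measure (ℝ × ℝ)))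
      = fun t => ⨅ c : ℚ,
        (if (volume : Measure (ℝ × ℝ)) ((fun x => (x, t)) ⁻¹' {p | ENNReal.ofReal (c:ℝ) < f p}) = 0
          then ENNReal.ofReal (c:ℝ) else ∞) := by
    funext t
    set E := essSup (fun x => f (x, t)) (volume : Measure (ℝ × ℝ)) with hE
    apply le_antisymm
    · refine le_iInf fun c => ?_
      split_ifs with h
      · refine essSup_le_of_ae_le _ ?_
        have : ∀ᵐ x ∂(volume : Measure (ℝ×ℝ)), f (x,t) ≤ ENNReal.ofReal (c:ℝ) := by
          rw [ae_iff]; simpa [preimage, not_le] using h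
        exact this
      · exact le_top
    · refine le_of_forall_gt_imp_ge_of_dense fun d hd => ?_
      rcases eq_or_ne d ∞ with rfl | hdt
      · exact le_top
      have hEt' : E ≠ ∞ := ne_top_of_lt hd
      have hlt : E.toReal < d.toReal := (ENNReal.toReal_lt_toReal hEt' hdt).mpr hd
      obtain ⟨c, hc1, hc2⟩ := exists_rat_btwn hlt
      have hEc : E < ENNReal.ofReal (c:ℝ) := by
        rw [ENNReal.lt_ofReal_iff_toReal_lt hEt']; exact hc1
      have hae := ENNReal.ae_le_essSup (fun x => f (x, t)) (μ := (volume : Measure (ℝ×ℝ)))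
      rw [← hE] at hae
      have hnull : (volume : Measure (ℝ × ℝ))
          ((fun x => (x, t)) ⁻¹' {p | ENNReal.ofReal (c:ℝ) < f p}) = 0 := by
        rw [measure_eq_zero_iff_ae_notMem]
        filter_upwards [hae] with x hx
        exact fun hmem => absurd hmem (not_lt.2 (hx.trans hEc.le))
      calc (⨅ c : ℚ, (if (volume : Measure (ℝ × ℝ))
            ((fun x => (x, t)) ⁻¹' {p | ENNReal.ofReal (c:ℝ) < f p}) = 0
            then ENNReal.ofReal (c:ℝ) else ∞)) ≤ ENNReal.ofReal (c:ℝ) := by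
              refine (iInf_le _ c).trans ?_
              rw [if_pos hnull]
        _ ≤ d := by
              rw [← ENNReal.ofReal_toReal hdt]
              exact ENNReal.ofReal_le_ofReal hc2.le
  rw [key]
  exact Measurable.iInf fun c => Measurable.ite ((hm c) (measurableSet_singleton 0))
    measurable_const measurable_const

lemma ae_ae_slice_le (g : (ℝ × ℝ) × ℝ → ℝ≥0∞) (hg : Measurable g)
    (c : ℝ → ℝ≥0∞) (hc : Measurable c)
    (h : ∀ t, ∀ᵐ x ∂(volume : Measure (ℝ × ℝ)), g (x, t) ≤ c t) :
    ∀ᵐ x ∂(volume : Measure (ℝ × ℝ)), ∀ᵐ t ∂(volume : Measure ℝ), g (x, t) ≤ c t := by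
  set s : Set ((ℝ × ℝ) × ℝ) := {p | c p.2 < g p} with hs
  have hsm : MeasurableSet s := measurableSet_lt (hc.comp measurable_snd) hg
  have hs0 : ((volume : Measure (ℝ×ℝ)).prod (volume : Measure ℝ)) s = 0 := by
    rw [Measure.prod_apply_symm hsm]
    have : ∀ t : ℝ, (volume : Measure (ℝ×ℝ)) ((fun x => (x, t)) ⁻¹' s) = 0 := by
      intro t
      rw [measure_eq_zero_iff_ae_notMem]
      filter_upwards [h t] with x hx
      exact fun hmem => absurd hmem (not_lt.2 hx)
    simp [this]
  have : ∀ᵐ p ∂((volume : Measure (ℝ×ℝ)).prod (volume : Measure ℝ)), g p ≤ c p.2 := by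
    rw [ae_iff]
    simpa [s, not_le] using hs0
  have h2 := Measure.ae_ae_of_ae_prod this
  exact h2

lemma lintegral_minkowski {ρ : ℝ} (hρ : 1 < ρ) {J : Set ℝ}
    (g : (ℝ × ℝ) × ℝ → ℝ≥0∞) (hg : Measurable g)
    (hfin : (∫⁻ x, (∫⁻ t in J, g (x, t)) ^ ρ ∂(volume : Measure (ℝ × ℝ))) ≠ ∞) :
    (∫⁻ x, (∫⁻ t in J, g (x, t)) ^ ρ ∂(volume : Measure (ℝ × ℝ))) ^ (1/ρ)
      ≤ ∫⁻ t in J, (∫⁻ x, g (x, t) ^ ρ ∂(volume : Measure (ℝ × ℝ))) ^ (1/ρ) := by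
  set μ : Measure (ℝ × ℝ) := volume with hμ
  set ν : Measure ℝ := (volume : Measure ℝ).restrict J with hν
  set Φ : ℝ × ℝ → ℝ≥0∞ := fun x => ∫⁻ t, g (x, t) ∂ν with hΦ
  have hΦm : Measurable Φ := hg.lintegral_prod_right'
  set I : ℝ≥0∞ := ∫⁻ x, Φ x ^ ρ ∂μ with hI
  have hρ0 : (0:ℝ) < ρ := lt_trans one_pos hρ
  rcases eq_or_ne I 0 with hI0 | hI0
  · rw [hI0, ENNReal.zero_rpow_of_pos (by positivity)]
    exact zero_le
  have hpq : (ρ/(ρ-1)).HolderConjugate ρ := (Real.HolderConjugate.conjExponent hρ).symm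
  set ρ' : ℝ := ρ/(ρ-1) with hρ'
  have hρ'0 : (0:ℝ) < ρ' := hpq.pos
  set R : ℝ≥0∞ := ∫⁻ t, (∫⁻ x, g (x, t) ^ ρ ∂μ) ^ (1/ρ) ∂ν with hR
  have key : I ≤ I ^ (1/ρ') * R := by
    have step1 : I = ∫⁻ x, ∫⁻ t, Φ x ^ (ρ - 1) * g (x, t) ∂ν ∂μ := by
      rw [hI]
      congr 1; funext x
      have hgx : Measurable fun t => g (x, t) := hg.comp measurable_prodMk_left
      rw [lintegral_const_mul _ hgx]
      have h2 := ENNReal.rpow_add_of_nonneg (x := Φ x) (ρ - 1) 1 (by linarith) zero_le_one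
      rw [ENNReal.rpow_one] at h2
      rw [← h2]
      norm_num
    have step2 : I = ∫⁻ t, ∫⁻ x, Φ x ^ (ρ - 1) * g (x, t) ∂μ ∂ν := by
      rw [step1]
      exact lintegral_lintegral_swap
        (((hΦm.comp measurable_fst).pow_const _).mul hg).aemeasurable
    have hmono : ∀ t : ℝ, ∫⁻ x, Φ x ^ (ρ - 1) * g (x, t) ∂μ
        ≤ I ^ (1/ρ') * (∫⁻ x, g (x, t) ^ ρ ∂μ) ^ (1/ρ) := by
      intro t
      have hold := ENNReal.lintegral_mul_le_Lp_mul_Lq (f := fun x => Φ x ^ (ρ - 1))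
        (g := fun x => g (x, t)) μ hpq
        ((hΦm.pow_const (ρ - 1)).aemeasurable)
        ((hg.comp (measurable_prodMk_right (y := t))).aemeasurable)
      have hfac : (∫⁻ x, ((fun x => Φ x ^ (ρ - 1)) x) ^ ρ' ∂μ) ^ (1/ρ') = I ^ (1/ρ') := by
        congr 1
        rw [hI]
        congr 1; funext x
        rw [← ENNReal.rpow_mul]
        congr 1
        rw [hρ']
        rw [mul_comm (ρ - 1)]
        exact div_mul_cancel₀ ρ (ne_of_gt (by linarith))
      calc ∫⁻ x, Φ x ^ (ρ - 1) * g (x, t) ∂μ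
          = ∫⁻ x, ((fun x => Φ x ^ (ρ - 1)) * fun x => g (x, t)) x ∂μ := rfl
        _ ≤ (∫⁻ x, ((fun x => Φ x ^ (ρ - 1)) x) ^ ρ' ∂μ) ^ (1/ρ')
              * (∫⁻ x, ((fun x => g (x, t)) x) ^ ρ ∂μ) ^ (1/ρ) := hold
        _ = I ^ (1/ρ') * (∫⁻ x, g (x, t) ^ ρ ∂μ) ^ (1/ρ) := by rw [hfac]
    calc I = ∫⁻ t, ∫⁻ x, Φ x ^ (ρ - 1) * g (x, t) ∂μ ∂ν := step2
      _ ≤ ∫⁻ t, I ^ (1/ρ') * (∫⁻ x, g (x, t) ^ ρ ∂μ) ^ (1/ρ) ∂ν := lintegral_mono hmono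
      _ = I ^ (1/ρ') * R := by
          rw [hR]
          exact lintegral_const_mul _
            ((meas_slice_lintegral (fun p => g p ^ ρ) (hg.pow_const ρ) μ).pow_const _)
  -- conclude
  have hI1 : I = I ^ (1/ρ') * I ^ (1/ρ) := by
    rw [← ENNReal.rpow_add _ _ hI0 hfin]
    have : 1/ρ' + 1/ρ = 1 := by
      have h2 := hpq.inv_add_inv_eq_one
      rw [one_div, one_div]
      exact h2
    rw [this, ENNReal.rpow_one]
  have h0 : I ^ (1/ρ') ≠ 0 := by
    simp only [ne_eq, ENNReal.rpow_eq_zero_iff, not_or]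
    constructor
    · rintro ⟨h, -⟩; exact hI0 h
    · rintro ⟨h, -⟩; exact hfin h
  have htop : I ^ (1/ρ') ≠ ∞ := by
    simp only [ne_eq, ENNReal.rpow_eq_top_iff, not_or]
    constructor
    · rintro ⟨h, -⟩; exact hI0 h
    · rintro ⟨h, -⟩; exact hfin h
  have hmul : I ^ (1/ρ') * I ^ (1/ρ) ≤ I ^ (1/ρ') * R := by rw [← hI1]; exact key
  exact (ENNReal.mul_le_mul_iff_right h0 htop).mp hmul

lemma setLIntegral_le_holder {ρ : ℝ} (hρ : 1 < ρ) (f : ℝ → ℝ≥0∞) (hf : Measurable f)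
    {s : Set ℝ} (hs : MeasurableSet s) :
    ∫⁻ u in s, f u ≤ (volume s) ^ (1 - 1/ρ) * (∫⁻ u, f u ^ ρ) ^ (1/ρ) := by
  have hρ0 : (0:ℝ) < ρ := lt_trans one_pos hρ
  have hpq : (ρ/(ρ-1)).HolderConjugate ρ := (Real.HolderConjugate.conjExponent hρ).symm
  set ρ' : ℝ := ρ/(ρ-1) with hρ'
  have hconj : 1/ρ' = 1 - 1/ρ := by
    rw [hρ', one_div_div]
    field_simp
  have hind : ∀ a : ℝ, s.indicator (fun _ => (1:ℝ≥0∞)) a * f a = s.indicator f a := by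
    intro a
    by_cases h : a ∈ s <;> simp [indicator, h]
  calc ∫⁻ u in s, f u = ∫⁻ u, s.indicator f u := (lintegral_indicator hs f).symm
    _ = ∫⁻ u, (s.indicator (fun _ => (1:ℝ≥0∞)) * f) u := by
        congr 1; funext a; exact (hind a).symm
    _ ≤ (∫⁻ u, (s.indicator (fun _ => (1:ℝ≥0∞)) u) ^ ρ') ^ (1/ρ')
          * (∫⁻ u, f u ^ ρ) ^ (1/ρ) :=
        ENNReal.lintegral_mul_le_Lp_mul_Lq _ hpq
          ((measurable_const.indicator hs).aemeasurable) hf.aemeasurable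
    _ = (volume s) ^ (1 - 1/ρ) * (∫⁻ u, f u ^ ρ) ^ (1/ρ) := by
        congr 1
        rw [← hconj]
        congr 1
        have : ∀ u : ℝ, (s.indicator (fun _ => (1:ℝ≥0∞)) u) ^ ρ'
            = s.indicator (fun _ => (1:ℝ≥0∞)) u := by
          intro u
          by_cases h : u ∈ s <;>
            simp [indicator, h, ENNReal.zero_rpow_of_pos hpq.pos]
        rw [funext this]
        exact lintegral_indicator_one hs

lemma eLpNorm_sub_le_lintegral (q : ℝ≥0∞) (hq : 1 ≤ q)
    (G : ℝ × ℝ → ℝ → ℂ)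
    (hGC1 : ∀ x, ContDiff ℝ 1 (G x))
    (hG'meas : Measurable (fun p : (ℝ × ℝ) × ℝ => deriv (G p.1) p.2))
    (H : ℝ × ℝ → ℝ) (hH : MemLp H q (volume : Measure (ℝ × ℝ)))
    (hHb : ∀ x u, ‖deriv (G x) u‖ ≤ H x)
    (a b : ℝ) (hab : a ≤ b) :
    eLpNorm (fun x => G x b - G x a) q (volume : Measure (ℝ × ℝ))
      ≤ ∫⁻ t in Set.Ioc a b,
          eLpNorm (fun x => deriv (G x) t) q (volume : Measure (ℝ × ℝ)) := by
  have hq0 : q ≠ 0 := fun h => by simp [h] at hq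
  set g : (ℝ × ℝ) × ℝ → ℝ≥0∞ := fun p => (‖deriv (G p.1) p.2‖₊ : ℝ≥0∞) with hg
  have hgm : Measurable g := hG'meas.enorm
  set M : ℝ → ℝ≥0∞ := fun t => eLpNorm (fun x => deriv (G x) t) q volume with hM
  have ptfact : ∀ x, (‖G x b - G x a‖₊ : ℝ≥0∞) ≤ ∫⁻ t in Set.Ioc a b, g (x, t) := by
    intro x
    have hftc : G x b - G x a = ∫ t in a..b, deriv (G x) t := by
      rw [intervalIntegral.integral_deriv_eq_sub
        (fun t _ => ((hGC1 x).differentiable one_ne_zero).differentiableAt)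
        (((hGC1 x).continuous_deriv le_rfl).intervalIntegrable a b)]
    rw [hftc, intervalIntegral.integral_of_le hab]
    exact enorm_integral_le_lintegral_enorm _
  by_cases hqt : q = ∞
  · subst hqt
    have hMe : M = fun t => essSup (fun x => g (x, t)) (volume : Measure (ℝ × ℝ)) := by
      funext t
      rw [hM]
      simp only [eLpNorm_exponent_top, eLpNormEssSup]
      rfl
    have hMm : Measurable M := by rw [hMe]; exact meas_slice_essSup g hgm
    have hae : ∀ᵐ x ∂(volume : Measure (ℝ × ℝ)), ∀ᵐ t ∂(volume : Measure ℝ), g (x, t) ≤ M t := by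
      refine ae_ae_slice_le g hgm M hMm fun t => ?_
      rw [hMe]
      exact ENNReal.ae_le_essSup _
    have hbound : ∀ᵐ x ∂(volume : Measure (ℝ × ℝ)),
        (‖G x b - G x a‖₊ : ℝ≥0∞) ≤ ∫⁻ t in Set.Ioc a b, M t := by
      filter_upwards [hae] with x hx
      refine (ptfact x).trans ?_
      exact lintegral_mono_ae (ae_restrict_of_ae hx)
    rw [eLpNorm_exponent_top, eLpNormEssSup]
    exact essSup_le_of_ae_le _ hbound
  · set ρq : ℝ := q.toReal with hρq
    have hρq1 : 1 ≤ ρq := by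
      rw [hρq, ← ENNReal.toReal_one]
      exact ENNReal.toReal_mono hqt hq
    have hρq0 : (0:ℝ) < ρq := lt_of_lt_of_le one_pos hρq1
    have hMt : ∀ t, M t = (∫⁻ x, g (x, t) ^ ρq ∂(volume : Measure (ℝ×ℝ))) ^ (1/ρq) := by
      intro t
      rw [hM]
      exact eLpNorm_eq_lintegral_rpow_enorm_toReal hq0 hqt
    rw [eLpNorm_eq_lintegral_rpow_enorm_toReal hq0 hqt]
    have step1 : (∫⁻ x, (‖G x b - G x a‖₊ : ℝ≥0∞) ^ ρq ∂(volume : Measure (ℝ×ℝ)))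
        ≤ ∫⁻ x, (∫⁻ t in Set.Ioc a b, g (x, t)) ^ ρq ∂(volume : Measure (ℝ×ℝ)) :=
      lintegral_mono fun x => ENNReal.rpow_le_rpow (ptfact x) hρq0.le
    rcases eq_or_lt_of_le hρq1 with hρqe | hρql
    · -- ρq = 1
      have : ∫⁻ x, (∫⁻ t in Set.Ioc a b, g (x, t)) ∂(volume : Measure (ℝ×ℝ))
          = ∫⁻ t in Set.Ioc a b, ∫⁻ x, g (x, t) ∂(volume : Measure (ℝ×ℝ)) :=
        lintegral_lintegral_swap hgm.aemeasurable
      calc (∫⁻ x, (‖G x b - G x a‖₊ : ℝ≥0∞) ^ ρq ∂(volume : Measure (ℝ×ℝ))) ^ (1/ρq)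
          ≤ (∫⁻ x, (∫⁻ t in Set.Ioc a b, g (x, t)) ^ ρq ∂(volume : Measure (ℝ×ℝ))) ^ (1/ρq) :=
            ENNReal.rpow_le_rpow step1 (by positivity)
        _ = ∫⁻ t in Set.Ioc a b, M t := by
            rw [← hρqe]
            simp only [ENNReal.rpow_one, one_div_one]
            rw [this]
            congr 1; funext t
            rw [hMt t, ← hρqe]
            simp [ENNReal.rpow_one]
    · -- 1 < ρq
      obtain ⟨hHmem, hHfin⟩ := hH
      have hfin : (∫⁻ x, (∫⁻ t in Set.Ioc a b, g (x, t)) ^ ρq ∂(volume : Measure (ℝ×ℝ))) ≠ ∞ := by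
        have hb1 : ∀ x, (∫⁻ t in Set.Ioc a b, g (x, t))
            ≤ ENNReal.ofReal (H x) * ENNReal.ofReal (b - a) := by
          intro x
          calc ∫⁻ t in Set.Ioc a b, g (x, t)
              ≤ ∫⁻ _ in Set.Ioc a b, ENNReal.ofReal (H x) := by
                refine lintegral_mono fun t => ?_
                show ‖deriv (G x) t‖ₑ ≤ ENNReal.ofReal (H x)
                rw [← ofReal_norm]
                exact ENNReal.ofReal_le_ofReal (hHb x t)
            _ = ENNReal.ofReal (H x) * ENNReal.ofReal (b - a) := by
                rw [setLIntegral_const, Real.volume_Ioc]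
          -- done
        have hb2 : ∀ x, (∫⁻ t in Set.Ioc a b, g (x, t)) ^ ρq
            ≤ (‖H x‖₊ : ℝ≥0∞) ^ ρq * (ENNReal.ofReal (b - a)) ^ ρq := by
          intro x
          calc (∫⁻ t in Set.Ioc a b, g (x, t)) ^ ρq
              ≤ (ENNReal.ofReal (H x) * ENNReal.ofReal (b - a)) ^ ρq :=
                ENNReal.rpow_le_rpow (hb1 x) hρq0.le
            _ = (ENNReal.ofReal (H x)) ^ ρq * (ENNReal.ofReal (b - a)) ^ ρq :=
                ENNReal.mul_rpow_of_nonneg _ _ hρq0.le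
            _ ≤ (‖H x‖₊ : ℝ≥0∞) ^ ρq * (ENNReal.ofReal (b - a)) ^ ρq := by
                gcongr
                exact Real.ofReal_le_enorm (H x)
        refine ne_top_of_le_ne_top ?_ (lintegral_mono hb2)
        rw [lintegral_mul_const'' (f := fun x => (‖H x‖₊ : ℝ≥0∞) ^ ρq) _ (hHmem.enorm.pow_const ρq)]
        exact ENNReal.mul_ne_top
          (lintegral_rpow_enorm_lt_top_of_eLpNorm_lt_top hq0 hqt hHfin).ne
          (ENNReal.rpow_ne_top_of_nonneg hρq0.le ENNReal.ofReal_ne_top)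
      have hmink := lintegral_minkowski hρql g hgm hfin
      calc (∫⁻ x, (‖G x b - G x a‖₊ : ℝ≥0∞) ^ ρq ∂(volume : Measure (ℝ×ℝ))) ^ (1/ρq)
          ≤ (∫⁻ x, (∫⁻ t in Set.Ioc a b, g (x, t)) ^ ρq ∂(volume : Measure (ℝ×ℝ))) ^ (1/ρq) :=
            ENNReal.rpow_le_rpow step1 (by positivity)
        _ ≤ ∫⁻ t in Set.Ioc a b, (∫⁻ x, g (x, t) ^ ρq ∂(volume : Measure (ℝ×ℝ))) ^ (1/ρq) := hmink
        _ = ∫⁻ t in Set.Ioc a b, M t := by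
            congr 1; funext t
            rw [hMt t]

/-- Lemma 5.a: for `G(x,·) ∈ C_c¹((1/2,5/2))` with the stated integrability
hypotheses, `‖G‖_{L^∞_u L^q_x} ≲ ‖G‖_{L^r_u L^q_x}^{1/r'} ‖∂_u G‖_{L^r_u L^q_x}^{1/r}`,
where the outer `L^∞_u` norm is the pointwise supremum in `u`. -/
theorem timeSpace_sup_interpolation (q r : ℝ≥0∞) (hq : 1 ≤ q) (hr : 1 ≤ r)
    (G : ℝ × ℝ → ℝ → ℂ)
    (hGmeas : Measurable (fun p : (ℝ × ℝ) × ℝ => G p.1 p.2))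
    (hGC1 : ∀ x, ContDiff ℝ 1 (G x))
    (hGsupp : ∀ x, Function.support (G x) ⊆ Set.Ioo (1/2 : ℝ) (5/2))
    (hG'meas : Measurable (fun p : (ℝ × ℝ) × ℝ => deriv (G p.1) p.2))
    (hGq : ∀ u : ℝ, MemLp (fun x => G x u) q (volume : Measure (ℝ × ℝ)))
    (hG'q : ∀ u : ℝ, MemLp (fun x => deriv (G x) u) q (volume : Measure (ℝ × ℝ)))
    (hdom : ∃ H : ℝ × ℝ → ℝ, MemLp H q (volume : Measure (ℝ × ℝ)) ∧
      ∀ x u, ‖deriv (G x) u‖ ≤ H x) :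
    ∃ C : ℝ, 0 < C ∧
      (⨆ u : ℝ, eLpNorm (fun x => G x u) q (volume : Measure (ℝ × ℝ))) ≤
        ENNReal.ofReal C *
          (mixedUXfull r q G) ^ (1 - (r⁻¹).toReal) *
          (mixedUXfull r q (fun x u => deriv (G x) u)) ^ (r⁻¹).toReal := by
  obtain ⟨H, hH, hHb⟩ := hdom
  set N : ℝ → ℝ≥0∞ := fun u => eLpNorm (fun x => G x u) q (volume : Measure (ℝ × ℝ)) with hN
  set M : ℝ → ℝ≥0∞ := fun t =>
    eLpNorm (fun x => deriv (G x) t) q (volume : Measure (ℝ × ℝ)) with hM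
  have hq0 : q ≠ 0 := fun h => by simp [h] at hq
  have h12 : (1:ℝ≥0∞) ≤ ENNReal.ofReal 2 := by
    rw [show (1:ℝ≥0∞) = ENNReal.ofReal 1 from ENNReal.ofReal_one.symm]
    exact ENNReal.ofReal_le_ofReal one_le_two
  -- support facts
  have hGz : ∀ x u, u ∉ Set.Ioo (1/2:ℝ) (5/2) → G x u = 0 := by
    intro x u hu
    by_contra h
    exact hu (hGsupp x (Function.mem_support.mpr h))
  have hDz : ∀ x t, t ∉ Set.Icc (1/2:ℝ) (5/2) → deriv (G x) t = 0 := by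
    intro x t ht
    have hopen : IsOpen (Set.Icc (1/2:ℝ) (5/2))ᶜ := isClosed_Icc.isOpen_compl
    have hev : G x =ᶠ[nhds t] fun _ => 0 := by
      filter_upwards [hopen.mem_nhds ht] with y hy
      exact hGz x y fun hy' => hy (Set.Ioo_subset_Icc_self hy')
    rw [hev.deriv_eq]
    exact deriv_const t 0
  have hNz : ∀ u, u ∉ Set.Icc (1/2:ℝ) (5/2) → N u = 0 := by
    intro u hu
    have h0 : (fun x : ℝ × ℝ => G x u) = fun _ => (0:ℂ) :=
      funext fun x => hGz x u fun h => hu (Set.Ioo_subset_Icc_self h)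
    show eLpNorm (fun x : ℝ × ℝ => G x u) q volume = 0
    rw [h0]
    exact eLpNorm_zero
  have hMz : ∀ t, t ∉ Set.Icc (1/2:ℝ) (5/2) → M t = 0 := by
    intro t ht
    have h0 : (fun x : ℝ × ℝ => deriv (G x) t) = fun _ => (0:ℂ) :=
      funext fun x => hDz x t ht
    show eLpNorm (fun x : ℝ × ℝ => deriv (G x) t) q volume = 0
    rw [h0]
    exact eLpNorm_zero
  -- measurability of N and M
  have hNm : Measurable N := by
    by_cases hqt : q = ∞
    · subst hqt
      have h0 : N = fun u => essSup (fun x => ((‖G x u‖₊ : ℝ≥0∞))) (volume : Measure (ℝ × ℝ)) := by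
        funext u
        show eLpNorm (fun x : ℝ × ℝ => G x u) ⊤ (volume : Measure (ℝ × ℝ)) = _
        rw [eLpNorm_exponent_top, eLpNormEssSup]
        rfl
      rw [h0]
      exact meas_slice_essSup (fun p => (‖G p.1 p.2‖₊ : ℝ≥0∞)) hGmeas.enorm
    · have h0 : N = fun u =>
          (∫⁻ x, (‖G x u‖₊ : ℝ≥0∞) ^ q.toReal ∂(volume : Measure (ℝ × ℝ))) ^ (1/q.toReal) := by
        funext u
        show eLpNorm (fun x : ℝ × ℝ => G x u) q (volume : Measure (ℝ × ℝ)) = _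
        exact eLpNorm_eq_lintegral_rpow_enorm_toReal hq0 hqt
      rw [h0]
      exact (meas_slice_lintegral (fun p => (‖G p.1 p.2‖₊ : ℝ≥0∞) ^ q.toReal)
        (hGmeas.enorm.pow_const _) _).pow_const _
  have hMm : Measurable M := by
    by_cases hqt : q = ∞
    · subst hqt
      have h0 : M = fun t =>
          essSup (fun x => ((‖deriv (G x) t‖₊ : ℝ≥0∞))) (volume : Measure (ℝ × ℝ)) := by
        funext t
        show eLpNorm (fun x : ℝ × ℝ => deriv (G x) t) ⊤ (volume : Measure (ℝ × ℝ)) = _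
        rw [eLpNorm_exponent_top, eLpNormEssSup]
        rfl
      rw [h0]
      exact meas_slice_essSup (fun p => (‖deriv (G p.1) p.2‖₊ : ℝ≥0∞)) hG'meas.enorm
    · have h0 : M = fun t =>
          (∫⁻ x, (‖deriv (G x) t‖₊ : ℝ≥0∞) ^ q.toReal ∂(volume : Measure (ℝ × ℝ))) ^ (1/q.toReal) := by
        funext t
        show eLpNorm (fun x : ℝ × ℝ => deriv (G x) t) q (volume : Measure (ℝ × ℝ)) = _
        exact eLpNorm_eq_lintegral_rpow_enorm_toReal hq0 hqt
      rw [h0]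
      exact (meas_slice_lintegral (fun p => (‖deriv (G p.1) p.2‖₊ : ℝ≥0∞) ^ q.toReal)
        (hG'meas.enorm.pow_const _) _).pow_const _
  -- Minkowski
  have key : ∀ a b : ℝ, a ≤ b →
      eLpNorm (fun x => G x b - G x a) q (volume : Measure (ℝ × ℝ)) ≤ ∫⁻ t in Set.Ioc a b, M t :=
    fun a b hab => eLpNorm_sub_le_lintegral q hq G hGC1 hG'meas H hH hHb a b hab
  have keyN : ∀ u : ℝ, N u ≤ ∫⁻ t in Set.Ioc 0 u, M t := by
    intro u
    by_cases h : 0 ≤ u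
    · have h0 : eLpNorm (fun x : ℝ × ℝ => G x u) q volume
          = eLpNorm (fun x : ℝ × ℝ => G x u - G x 0) q volume := by
        congr 1
        funext x
        rw [hGz x 0 (by norm_num), sub_zero]
      calc N u = eLpNorm (fun x : ℝ × ℝ => G x u - G x 0) q volume := h0
        _ ≤ ∫⁻ t in Set.Ioc 0 u, M t := key 0 u h
    · rw [hNz u fun hu => h (le_trans (by norm_num) hu.1)]
      exact zero_le
  -- uniform bounds
  set K := eLpNorm H q (volume : Measure (ℝ × ℝ)) with hK
  have hKfin : K ≠ ∞ := hH.2.ne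
  have hMK : ∀ t, M t ≤ K := fun t => eLpNorm_mono_real fun x => hHb x t
  have hIcc : (volume : Measure ℝ) (Set.Icc (1/2:ℝ) (5/2)) = ENNReal.ofReal 2 := by
    rw [Real.volume_Icc]
    norm_num
  have hMint : ∫⁻ t, M t ∂(volume : Measure ℝ) ≤ K * ENNReal.ofReal 2 := by
    calc ∫⁻ t, M t ∂(volume : Measure ℝ)
        = ∫⁻ t, (Set.Icc (1/2:ℝ) (5/2)).indicator M t ∂(volume : Measure ℝ) := by
          congr 1
          funext t
          by_cases ht : t ∈ Set.Icc (1/2:ℝ) (5/2)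
          · rw [Set.indicator_of_mem ht]
          · rw [Set.indicator_of_notMem ht, hMz t ht]
      _ = ∫⁻ t in Set.Icc (1/2:ℝ) (5/2), M t := lintegral_indicator measurableSet_Icc M
      _ ≤ ∫⁻ _ in Set.Icc (1/2:ℝ) (5/2), K := setLIntegral_mono' measurableSet_Icc fun t _ => hMK t
      _ = K * ENNReal.ofReal 2 := by rw [setLIntegral_const, hIcc]
  -- averaging
  have avg : ∀ u₀ ℓ : ℝ, 0 < ℓ →
      N u₀ ≤ (ENNReal.ofReal ℓ)⁻¹ * (∫⁻ u in Set.Ioc u₀ (u₀+ℓ), N u)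
        + ∫⁻ t in Set.Ioc u₀ (u₀+ℓ), M t := by
    intro u₀ ℓ hℓ
    have hvol : (volume : Measure ℝ) (Set.Ioc u₀ (u₀+ℓ)) = ENNReal.ofReal ℓ := by
      rw [Real.volume_Ioc, add_sub_cancel_left]
    have hL0 : ENNReal.ofReal ℓ ≠ 0 := (ENNReal.ofReal_pos.mpr hℓ).ne'
    have hLt : ENNReal.ofReal ℓ ≠ ∞ := ENNReal.ofReal_ne_top
    have h1 : ∀ u ∈ Set.Ioc u₀ (u₀+ℓ), N u₀ ≤ N u + ∫⁻ t in Set.Ioc u₀ (u₀+ℓ), M t := by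
      intro u hu
      have heq : (fun x : ℝ × ℝ => G x u₀) = fun x => G x u - (G x u - G x u₀) := by
        funext x
        ring
      have tri : N u₀ ≤ N u + eLpNorm (fun x : ℝ × ℝ => G x u - G x u₀) q volume := by
        calc N u₀ = eLpNorm (fun x : ℝ × ℝ => G x u - (G x u - G x u₀)) q volume := by
              show eLpNorm (fun x : ℝ × ℝ => G x u₀) q volume = _
              rw [heq]
          _ ≤ N u + eLpNorm (fun x : ℝ × ℝ => G x u - G x u₀) q volume :=
              eLpNorm_sub_le (hGq u).1 (((hGq u).sub (hGq u₀)).1) hq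
      refine tri.trans (add_le_add_right ?_ (N u))
      refine (key u₀ u hu.1.le).trans ?_
      exact lintegral_mono_set (Set.Ioc_subset_Ioc_right hu.2)
    have h2 : N u₀ * ENNReal.ofReal ℓ
        ≤ (∫⁻ u in Set.Ioc u₀ (u₀+ℓ), N u)
          + (∫⁻ t in Set.Ioc u₀ (u₀+ℓ), M t) * ENNReal.ofReal ℓ := by
      calc N u₀ * ENNReal.ofReal ℓ = ∫⁻ _ in Set.Ioc u₀ (u₀+ℓ), N u₀ := by
            rw [setLIntegral_const, hvol]
        _ ≤ ∫⁻ u in Set.Ioc u₀ (u₀+ℓ), (N u + ∫⁻ t in Set.Ioc u₀ (u₀+ℓ), M t) :=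
            setLIntegral_mono (hNm.add measurable_const) h1
        _ = _ := by
            rw [lintegral_add_right _ measurable_const, setLIntegral_const, hvol]
    calc N u₀ = (ENNReal.ofReal ℓ)⁻¹ * (N u₀ * ENNReal.ofReal ℓ) := by
          rw [mul_comm (N u₀), ← mul_assoc, ENNReal.inv_mul_cancel hL0 hLt, one_mul]
      _ ≤ (ENNReal.ofReal ℓ)⁻¹ * ((∫⁻ u in Set.Ioc u₀ (u₀+ℓ), N u)
            + (∫⁻ t in Set.Ioc u₀ (u₀+ℓ), M t) * ENNReal.ofReal ℓ) := mul_le_mul_right h2 _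
      _ = _ := by
          rw [mul_add]
          congr 1
          rw [mul_comm _ (ENNReal.ofReal ℓ), ← mul_assoc, ENNReal.inv_mul_cancel hL0 hLt, one_mul]
  refine ⟨2, two_pos, ?_⟩
  rcases eq_or_ne r ⊤ with hrt | hrt
  · -- r = ∞
    subst hrt
    have hmxA : mixedUXfull ⊤ q G = essSup N (volume : Measure ℝ) := by
      rw [mixedUXfull, eLpNormENN, if_pos rfl]
    simp only [hmxA, ENNReal.inv_top, ENNReal.toReal_zero, sub_zero, ENNReal.rpow_one,
      ENNReal.rpow_zero, mul_one]
    refine iSup_le fun u₀ => ?_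
    have hsup : N u₀ ≤ essSup N (volume : Measure ℝ) := by
      refine ENNReal.le_of_forall_pos_le_add fun ε hε _ => ?_
      have hKnn : (0:ℝ) ≤ K.toReal := ENNReal.toReal_nonneg
      set ℓ : ℝ := (ε : ℝ) / (K.toReal + 1) with hℓdef
      have hεpos : (0:ℝ) < ε := hε
      have hℓ : 0 < ℓ := div_pos hεpos (by linarith)
      have hL0 : ENNReal.ofReal ℓ ≠ 0 := (ENNReal.ofReal_pos.mpr hℓ).ne'
      have hLt : ENNReal.ofReal ℓ ≠ ∞ := ENNReal.ofReal_ne_top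
      have hB1 : ∫⁻ u in Set.Ioc u₀ (u₀+ℓ), N u
          ≤ essSup N (volume : Measure ℝ) * ENNReal.ofReal ℓ := by
        calc ∫⁻ u in Set.Ioc u₀ (u₀+ℓ), N u
            ≤ ∫⁻ _ in Set.Ioc u₀ (u₀+ℓ), essSup N (volume : Measure ℝ) :=
              lintegral_mono_ae (ae_restrict_of_ae (ENNReal.ae_le_essSup N))
          _ = _ := by rw [setLIntegral_const, Real.volume_Ioc, add_sub_cancel_left]
      have hB2 : ∫⁻ t in Set.Ioc u₀ (u₀+ℓ), M t ≤ K * ENNReal.ofReal ℓ := by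
        calc ∫⁻ t in Set.Ioc u₀ (u₀+ℓ), M t ≤ ∫⁻ _ in Set.Ioc u₀ (u₀+ℓ), K :=
              setLIntegral_mono' measurableSet_Ioc fun t _ => hMK t
          _ = _ := by rw [setLIntegral_const, Real.volume_Ioc, add_sub_cancel_left]
      have hKℓ : K * ENNReal.ofReal ℓ ≤ (ε : ℝ≥0∞) := by
        rw [show K = ENNReal.ofReal K.toReal from (ENNReal.ofReal_toReal hKfin).symm,
          ← ENNReal.ofReal_mul hKnn]
        have hre : K.toReal * ℓ ≤ (ε : ℝ) := by
          rw [hℓdef]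
          rw [show K.toReal * ((ε:ℝ) / (K.toReal + 1)) = (ε:ℝ) * (K.toReal / (K.toReal + 1)) by
            ring]
          calc (ε:ℝ) * (K.toReal / (K.toReal + 1)) ≤ (ε:ℝ) * 1 := by
                refine mul_le_mul_of_nonneg_left ?_ hεpos.le
                rw [div_le_one (by linarith)]
                linarith
            _ = (ε:ℝ) := mul_one _
        calc ENNReal.ofReal (K.toReal * ℓ) ≤ ENNReal.ofReal (ε:ℝ) :=
              ENNReal.ofReal_le_ofReal hre
          _ = (ε : ℝ≥0∞) := ENNReal.ofReal_coe_nnreal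
      calc N u₀ ≤ (ENNReal.ofReal ℓ)⁻¹ * (∫⁻ u in Set.Ioc u₀ (u₀+ℓ), N u)
            + ∫⁻ t in Set.Ioc u₀ (u₀+ℓ), M t := avg u₀ ℓ hℓ
        _ ≤ (ENNReal.ofReal ℓ)⁻¹ * (essSup N (volume : Measure ℝ) * ENNReal.ofReal ℓ)
            + K * ENNReal.ofReal ℓ := add_le_add (mul_le_mul_right hB1 _) hB2
        _ ≤ essSup N (volume : Measure ℝ) + (ε : ℝ≥0∞) := by
            refine add_le_add (le_of_eq ?_) hKℓ
            rw [mul_comm (essSup N (volume : Measure ℝ)), ← mul_assoc,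
              ENNReal.inv_mul_cancel hL0 hLt, one_mul]
    exact hsup.trans (le_mul_of_one_le_left (zero_le) h12)
  rcases eq_or_ne r 1 with hr1 | hr1
  · -- r = 1
    subst hr1
    have hmxB : mixedUXfull 1 q (fun x u => deriv (G x) u) = ∫⁻ t, M t ∂(volume : Measure ℝ) := by
      rw [mixedUXfull, eLpNormENN, if_neg ENNReal.one_ne_top]
      simp [ENNReal.toReal_one, ENNReal.rpow_one]
      rfl
    rw [hmxB]
    simp only [inv_one, ENNReal.toReal_one, sub_self, ENNReal.rpow_zero, mul_one,
      ENNReal.rpow_one]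
    refine iSup_le fun u => ?_
    exact (keyN u).trans ((setLIntegral_le_lintegral _ _).trans
      (le_mul_of_one_le_left (zero_le) h12))
  -- 1 < r < ∞
  have hr1' : (1:ℝ≥0∞) < r := lt_of_le_of_ne hr (Ne.symm hr1)
  have hρr1 : 1 < r.toReal := by
    rw [← ENNReal.toReal_one]
    exact (ENNReal.toReal_lt_toReal ENNReal.one_ne_top hrt).mpr hr1'
  have hρr0 : (0:ℝ) < r.toReal := lt_trans one_pos hρr1
  have hexp : (r⁻¹).toReal = 1/r.toReal := by rw [ENNReal.toReal_inv, one_div]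
  set A := (∫⁻ u, N u ^ r.toReal ∂(volume : Measure ℝ)) ^ (1/r.toReal) with hA
  set B := (∫⁻ t, M t ^ r.toReal ∂(volume : Measure ℝ)) ^ (1/r.toReal) with hB
  have hmxA : mixedUXfull r q G = A := by
    rw [mixedUXfull, eLpNormENN, if_neg hrt]
  have hmxB : mixedUXfull r q (fun x u => deriv (G x) u) = B := by
    rw [mixedUXfull, eLpNormENN, if_neg hrt]
  rw [hmxA, hmxB, hexp]
  set c : ℝ := 1 - 1/r.toReal with hc
  have hcpos : 0 < c := by
    rw [hc]
    have h0 : 1/r.toReal < 1 := by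
      rw [div_lt_one hρr0]
      exact hρr1
    linarith
  have hcc : 1 - c = 1/r.toReal := by rw [hc]; ring
  rw [← hcc]
  -- goal : ⨆ u, N u ≤ ENNReal.ofReal 2 * A ^ c * B ^ (1 - c)
  have hNbd : ∀ u, N u ≤ K * ENNReal.ofReal 2 :=
    fun u => (keyN u).trans ((setLIntegral_le_lintegral _ _).trans hMint)
  have hfin_aux : ∀ (f : ℝ → ℝ≥0∞) (D : ℝ≥0∞), D ≠ ∞ → (∀ t, f t ≤ D) →
      (∀ t, t ∉ Set.Icc (1/2:ℝ) (5/2) → f t = 0) →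
      (∫⁻ t, f t ^ r.toReal ∂(volume : Measure ℝ)) ≠ ∞ := by
    intro f D hD hfD hfz
    have hb : ∀ t, f t ^ r.toReal
        ≤ (Set.Icc (1/2:ℝ) (5/2)).indicator (fun _ => D ^ r.toReal) t := by
      intro t
      by_cases ht : t ∈ Set.Icc (1/2:ℝ) (5/2)
      · rw [Set.indicator_of_mem ht]
        exact ENNReal.rpow_le_rpow (hfD t) hρr0.le
      · rw [Set.indicator_of_notMem ht, hfz t ht, ENNReal.zero_rpow_of_pos hρr0]
    refine ne_top_of_le_ne_top ?_ (lintegral_mono hb)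
    rw [lintegral_indicator measurableSet_Icc, setLIntegral_const, hIcc]
    exact ENNReal.mul_ne_top (ENNReal.rpow_ne_top_of_nonneg hρr0.le hD) ENNReal.ofReal_ne_top
  have hAfin : A ≠ ∞ := by
    rw [hA]
    refine ENNReal.rpow_ne_top_of_nonneg (by positivity) ?_
    exact hfin_aux N (K * ENNReal.ofReal 2)
      (ENNReal.mul_ne_top hKfin ENNReal.ofReal_ne_top) hNbd hNz
  have hBfin : B ≠ ∞ := by
    rw [hB]
    refine ENNReal.rpow_ne_top_of_nonneg (by positivity) ?_
    exact hfin_aux M K hKfin hMK hMz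
  rcases eq_or_ne B 0 with hB0 | hB0
  · -- B = 0 : everything vanishes
    have hMint0 : (∫⁻ t, M t ^ r.toReal ∂(volume : Measure ℝ)) = 0 := by
      rw [hB] at hB0
      rcases (ENNReal.rpow_eq_zero_iff).mp hB0 with ⟨h, -⟩ | ⟨-, h⟩
      · exact h
      · exfalso
        have : (0:ℝ) < 1/r.toReal := by positivity
        linarith
    have hae0 : M =ᵐ[volume] 0 := by
      have h0 := (lintegral_eq_zero_iff (hMm.pow_const r.toReal)).mp hMint0
      filter_upwards [h0] with t ht
      simp only [Pi.zero_apply] at ht ⊢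
      rcases (ENNReal.rpow_eq_zero_iff).mp ht with ⟨h, -⟩ | ⟨-, h⟩
      · exact h
      · linarith
    have hM0 : ∫⁻ t, M t ∂(volume : Measure ℝ) = 0 := (lintegral_eq_zero_iff hMm).mpr hae0
    refine iSup_le fun u => ?_
    have h0 : N u = 0 :=
      le_antisymm ((keyN u).trans ((setLIntegral_le_lintegral _ _).trans hM0.le)) (zero_le)
    rw [h0]
    exact zero_le
  rcases eq_or_ne A 0 with hA0 | hA0
  · -- A = 0 : N vanishes a.e., sup is 0 by shrinking windows
    have hNint0 : (∫⁻ u, N u ^ r.toReal ∂(volume : Measure ℝ)) = 0 := by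
      rw [hA] at hA0
      rcases (ENNReal.rpow_eq_zero_iff).mp hA0 with ⟨h, -⟩ | ⟨-, h⟩
      · exact h
      · exfalso
        have : (0:ℝ) < 1/r.toReal := by positivity
        linarith
    have hae0 : N =ᵐ[volume] 0 := by
      have h0 := (lintegral_eq_zero_iff (hNm.pow_const r.toReal)).mp hNint0
      filter_upwards [h0] with u hu
      simp only [Pi.zero_apply] at hu ⊢
      rcases (ENNReal.rpow_eq_zero_iff).mp hu with ⟨h, -⟩ | ⟨-, h⟩
      · exact h
      · linarith
    have hNint : ∫⁻ u, N u ∂(volume : Measure ℝ) = 0 := (lintegral_eq_zero_iff hNm).mpr hae0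
    refine iSup_le fun u₀ => ?_
    have hNu0 : N u₀ = 0 := by
      refine le_antisymm ?_ (zero_le)
      refine ENNReal.le_of_forall_pos_le_add fun ε hε _ => ?_
      rw [zero_add]
      have hεpos : (0:ℝ) < ε := hε
      by_cases hBz : B = 0
      · exact absurd hBz hB0
      have hbpos' : 0 < B.toReal := ENNReal.toReal_pos hB0 hBfin
      set b : ℝ := B.toReal with hbB
      have hbpos : 0 < b := hbpos'
      set ℓ : ℝ := ((ε:ℝ)/b) ^ (1/c) with hℓdef
      have hℓ : 0 < ℓ := Real.rpow_pos_of_pos (div_pos hεpos hbpos) _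
      have hJN : ∫⁻ u in Set.Ioc u₀ (u₀+ℓ), N u = 0 :=
        le_antisymm ((setLIntegral_le_lintegral _ _).trans hNint.le) (zero_le)
      have hJM : ∫⁻ t in Set.Ioc u₀ (u₀+ℓ), M t ≤ (ENNReal.ofReal ℓ) ^ c * B := by
        have hh := setLIntegral_le_holder hρr1 M hMm
          (measurableSet_Ioc (a := u₀) (b := u₀+ℓ))
        rw [Real.volume_Ioc, add_sub_cancel_left] at hh
        exact hh
      calc N u₀ ≤ (ENNReal.ofReal ℓ)⁻¹ * (∫⁻ u in Set.Ioc u₀ (u₀+ℓ), N u)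
            + ∫⁻ t in Set.Ioc u₀ (u₀+ℓ), M t := avg u₀ ℓ hℓ
        _ ≤ (ENNReal.ofReal ℓ)⁻¹ * 0 + (ENNReal.ofReal ℓ) ^ c * B := by
            refine add_le_add ?_ hJM
            rw [hJN]
        _ = (ENNReal.ofReal ℓ) ^ c * B := by rw [mul_zero, zero_add]
        _ ≤ (ε : ℝ≥0∞) := by
            rw [ENNReal.ofReal_rpow_of_pos hℓ]
            have hℓc : ℓ ^ c = (ε:ℝ)/b := by
              rw [hℓdef, ← Real.rpow_mul (div_pos hεpos hbpos).le,
                one_div_mul_cancel hcpos.ne', Real.rpow_one]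
            rw [hℓc, show B = ENNReal.ofReal b from (ENNReal.ofReal_toReal hBfin).symm,
              ← ENNReal.ofReal_mul (by positivity), div_mul_cancel₀ _ hbpos.ne']
            exact le_of_eq ENNReal.ofReal_coe_nnreal
    rw [hNu0]
    exact zero_le
  -- main case : 0 < A, B < ∞
  have hapos : 0 < A.toReal := ENNReal.toReal_pos hA0 hAfin
  have hbpos : 0 < B.toReal := ENNReal.toReal_pos hB0 hBfin
  set a : ℝ := A.toReal with haA
  set b : ℝ := B.toReal with hbB
  set X : ℝ := a ^ c * b ^ (1 - c) with hX
  have hXpos : 0 < X := mul_pos (Real.rpow_pos_of_pos hapos c) (Real.rpow_pos_of_pos hbpos _)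
  refine iSup_le fun u₀ => ?_
  set ℓ : ℝ := a / b with hℓdef
  have hℓ : 0 < ℓ := div_pos hapos hbpos
  set L := ENNReal.ofReal ℓ with hL
  have hL0 : L ≠ 0 := (ENNReal.ofReal_pos.mpr hℓ).ne'
  have hLt : L ≠ ∞ := ENNReal.ofReal_ne_top
  have hJN : ∫⁻ u in Set.Ioc u₀ (u₀+ℓ), N u ≤ L ^ c * A := by
    have hh := setLIntegral_le_holder hρr1 N hNm (measurableSet_Ioc (a := u₀) (b := u₀+ℓ))
    rw [Real.volume_Ioc, add_sub_cancel_left] at hh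
    exact hh
  have hJM : ∫⁻ t in Set.Ioc u₀ (u₀+ℓ), M t ≤ L ^ c * B := by
    have hh := setLIntegral_le_holder hρr1 M hMm (measurableSet_Ioc (a := u₀) (b := u₀+ℓ))
    rw [Real.volume_Ioc, add_sub_cancel_left] at hh
    exact hh
  have ea : a ^ (-1+c) * a = a ^ c := by
    have h0 := Real.rpow_add hapos (-1+c) 1
    rw [Real.rpow_one] at h0
    rw [← h0]
    norm_num
  have eb : (b ^ (-1+c))⁻¹ = b ^ (1-c) := by
    rw [← Real.rpow_neg hbpos.le]
    congr 1
    ring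
  have e1 : ℓ ^ (-1+c) * a = X := by
    rw [hℓdef, hX, Real.div_rpow hapos.le hbpos.le, div_eq_mul_inv, eb]
    calc a ^ (-1+c) * b ^ (1-c) * a = (a ^ (-1+c) * a) * b ^ (1-c) := by ring
      _ = a ^ c * b ^ (1-c) := by rw [ea]
  have e2 : ℓ ^ c * b = X := by
    rw [hℓdef, hX, Real.div_rpow hapos.le hbpos.le, div_eq_mul_inv]
    have eb2 : (b ^ c)⁻¹ * b = b ^ (1-c) := by
      have h0 := Real.rpow_add hbpos (-c) 1
      rw [Real.rpow_one] at h0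
      rw [← Real.rpow_neg hbpos.le, ← h0]
      congr 1
      ring
    calc a ^ c * (b ^ c)⁻¹ * b = a ^ c * ((b ^ c)⁻¹ * b) := by ring
      _ = a ^ c * b ^ (1-c) := by rw [eb2]
  have hterm1 : L⁻¹ * (L ^ c * A) = ENNReal.ofReal X := by
    rw [← mul_assoc, ← ENNReal.rpow_neg_one L, ← ENNReal.rpow_add _ _ hL0 hLt]
    rw [hL, ENNReal.ofReal_rpow_of_pos hℓ,
      show A = ENNReal.ofReal a from (ENNReal.ofReal_toReal hAfin).symm,
      ← ENNReal.ofReal_mul (Real.rpow_nonneg hℓ.le _)]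
    rw [e1]
  have hterm2 : L ^ c * B = ENNReal.ofReal X := by
    rw [hL, ENNReal.ofReal_rpow_of_pos hℓ,
      show B = ENNReal.ofReal b from (ENNReal.ofReal_toReal hBfin).symm,
      ← ENNReal.ofReal_mul (Real.rpow_nonneg hℓ.le _)]
    rw [e2]
  calc N u₀ ≤ L⁻¹ * (∫⁻ u in Set.Ioc u₀ (u₀+ℓ), N u) + ∫⁻ t in Set.Ioc u₀ (u₀+ℓ), M t :=
        avg u₀ ℓ hℓ
    _ ≤ L⁻¹ * (L ^ c * A) + L ^ c * B := add_le_add (mul_le_mul_right hJN _) hJM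
    _ = ENNReal.ofReal X + ENNReal.ofReal X := by rw [hterm1, hterm2]
    _ = ENNReal.ofReal (2 * X) := by
        rw [← ENNReal.ofReal_add hXpos.le hXpos.le]
        congr 1
        ring
    _ = ENNReal.ofReal 2 * A ^ c * B ^ (1 - c) := by
        rw [ENNReal.ofReal_mul (by norm_num), hX, ENNReal.ofReal_mul
          (Real.rpow_nonneg hapos.le _),
          show A = ENNReal.ofReal a from (ENNReal.ofReal_toReal hAfin).symm,
          show B = ENNReal.ofReal b from (ENNReal.ofReal_toReal hBfin).symm]
        rw [ENNReal.ofReal_rpow_of_pos hapos, ENNReal.ofReal_rpow_of_pos hbpos, mul_assoc]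

end
end
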